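/- arXiv:2503.07915 — 5 statements merged into one kernel-verified Lean document; each statement's English description precedes it below -/
import Mathlib

section
/- Let R be a finite nonzero commutative ring with identity in which 2 is a unit, let |R| = r, let n ≥ 2, and let f_i : R^{2i-2} → R for 2 ≤ i ≤ n be symmetric functions. Then there are exactly r vectors a ∈ R^n satisfying a_i + a_i = f_i(a_1,a_1,a_2,a_2,…,a_{i-1},a_{i-1}) for all 2 ≤ i ≤ n (i.e., Γ(R; f_2,…,f_n) viewed with loops has exactly r loops), and the loopless simple graph Γ(R; f_2,…,f_n) has exactly r vertices of degree r−1 and exactly r^n − r vertices of degree r. -/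
/-- The adjacency condition of the graph `Γ(R; f₂, …, f_n)`: vectors `a, b ∈ R^n`
(0-indexed, coordinate `i` corresponding to subscript `i+1`) satisfy the system
`a_i + b_i = f_i(a_1, b_1, …, a_{i-1}, b_{i-1})` for all `2 ≤ i ≤ n`. -/
def gAdj {R : Type} [CommRing R] (n : ℕ)
    (f : (i : ℕ) → (Fin i → R) → (Fin i → R) → R)
    (a b : Fin n → R) : Prop :=
  ∀ i : Fin n, 1 ≤ (i : ℕ) →
    a i + b i = f i (fun j => a (Fin.castLE i.isLt.le j))
                    (fun j => b (Fin.castLE i.isLt.le j))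

/-- The (loopless, simple) graph `Γ(R; f₂, …, f_n)` on vertex set `R^n`:
distinct `a, b` are adjacent iff the system of equations holds. -/
def Gamma (R : Type) [CommRing R] (n : ℕ)
    (f : (i : ℕ) → (Fin i → R) → (Fin i → R) → R) :
    SimpleGraph (Fin n → R) :=
  SimpleGraph.fromRel (fun a b => gAdj n f a b)

/-- Recursively build the unique partner of `a` with first coordinate `t`. -/
def build {R : Type} [CommRing R] (n : ℕ)
    (f : (i : ℕ) → (Fin i → R) → (Fin i → R) → R)
    (a : Fin n → R) (t : R) : ℕ → R
  | 0 => t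
  | (i+1) =>
    if h : i + 1 < n then
      f (i+1) (fun j => a (Fin.castLE (Nat.le_of_lt h) j))
              (fun j => build n f a t j) - a ⟨i+1, h⟩
    else 0
  decreasing_by all_goals exact j.isLt

/-- Recursively build the loop vector with first coordinate `t`, where `u` is a half. -/
def buildL {R : Type} [CommRing R] (u : R)
    (f : (i : ℕ) → (Fin i → R) → (Fin i → R) → R)
    (t : R) : ℕ → R
  | 0 => t
  | (i+1) =>
    u * f (i+1) (fun j => buildL u f t j) (fun j => buildL u f t j)
  decreasing_by all_goals exact j.isLt

/-- If `2` is a unit in the finite ring `R` with `|R| = r` and the `f_i` are symmetric, then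
`Γ(R; f₂,…,f_n)` (with loops) has exactly `r` loops, and the loopless graph has exactly `r`
vertices of degree `r - 1` and exactly `r^n - r` vertices of degree `r`. -/
theorem statement_2 (R : Type) [CommRing R] [Nontrivial R] [Fintype R]
    (h2 : IsUnit (2 : R)) (n : ℕ) (hn : 2 ≤ n)
    (f : (i : ℕ) → (Fin i → R) → (Fin i → R) → R)
    (hsym : ∀ (i : ℕ) (x y : Fin i → R), f i x y = f i y x) :
    {a : Fin n → R | gAdj n f a a}.ncard = Fintype.card R ∧
    {a : Fin n → R | ((Gamma R n f).neighborSet a).ncard = Fintype.card R - 1}.ncard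
      = Fintype.card R ∧
    {a : Fin n → R | ((Gamma R n f).neighborSet a).ncard = Fintype.card R}.ncard
      = Fintype.card R ^ n - Fintype.card R := by
  classical
  have hn0 : 0 < n := by omega
  obtain ⟨v, hv⟩ := h2
  have hu : (2 : R) * ↑v⁻¹ = 1 := by
    rw [← hv]; exact Units.mul_inv v
  set u : R := ↑v⁻¹ with hu_def
  set r := Fintype.card R with hr
  have hr2 : 2 ≤ r := Fintype.one_lt_card
  set L : Set (Fin n → R) := {a : Fin n → R | gAdj n f a a} with hL
  have build_zero : ∀ (a : Fin n → R) (t : R), build n f a t 0 = t := by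
    intro a t; simp only [build]
  have buildL_zero : ∀ (t : R), buildL u f t 0 = t := by
    intro t; simp only [buildL]
  -- the partner map
  have build_adj : ∀ (a : Fin n → R) (t : R),
      gAdj n f a (fun i : Fin n => build n f a t i) := by
    intro a t i hi
    obtain ⟨k, hk⟩ : ∃ k, (i : ℕ) = k + 1 := ⟨(i : ℕ) - 1, by omega⟩
    have hlt : k + 1 < n := hk ▸ i.isLt
    have hieq : i = ⟨k + 1, hlt⟩ := Fin.ext hk
    subst hieq
    show a _ + build n f a t (k+1) = _
    rw [build, dif_pos hlt]
    ring_nf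
    rfl
  have build_uniq : ∀ (a b : Fin n → R), gAdj n f a b →
      ∀ i : Fin n, b i = build n f a (b ⟨0, hn0⟩) (i : ℕ) := by
    intro a b hab
    have key : ∀ m : ℕ, ∀ hm : m < n, b ⟨m, hm⟩ = build n f a (b ⟨0, hn0⟩) m := by
      intro m
      induction m using Nat.strong_induction_on with
      | _ m ih =>
        match m with
        | 0 => intro hm; rw [build]
        | k+1 =>
          intro hm
          rw [build, dif_pos hm]
          have hthis := hab ⟨k+1, hm⟩ (Nat.succ_le_succ (Nat.zero_le k))
          have harg : (fun j : Fin (k+1) => b (Fin.castLE (Nat.le_of_lt hm) j))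
              = fun j : Fin (k+1) => build n f a (b ⟨0, hn0⟩) (j : ℕ) := by
            funext j
            exact ih (j : ℕ) j.isLt (lt_trans j.isLt hm)
          rw [harg] at hthis
          simp only [Fin.val_mk] at hthis ⊢
          linear_combination hthis
    intro i
    exact key (i : ℕ) i.isLt
  -- loop build lemmas
  have buildL_adj : ∀ (t : R),
      gAdj n f (fun i : Fin n => buildL u f t i) (fun i : Fin n => buildL u f t i) := by
    intro t i hi
    obtain ⟨k, hk⟩ : ∃ k, (i : ℕ) = k + 1 := ⟨(i : ℕ) - 1, by omega⟩
    have hlt : k + 1 < n := hk ▸ i.isLt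
    have hieq : i = ⟨k + 1, hlt⟩ := Fin.ext hk
    subst hieq
    show buildL u f t (k+1) + buildL u f t (k+1) = _
    rw [buildL]
    set F := f (k+1) (fun j : Fin (k+1) => buildL u f t (j : ℕ))
      (fun j : Fin (k+1) => buildL u f t (j : ℕ)) with hF
    show u * F + u * F = _
    have h1 : u * F + u * F = (2 * u) * F := by ring
    rw [h1, hu, one_mul]
    rfl
  have buildL_uniq : ∀ (a : Fin n → R), gAdj n f a a →
      ∀ i : Fin n, a i = buildL u f (a ⟨0, hn0⟩) (i : ℕ) := by
    intro a ha
    have key : ∀ m : ℕ, ∀ hm : m < n, a ⟨m, hm⟩ = buildL u f (a ⟨0, hn0⟩) m := by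
      intro m
      induction m using Nat.strong_induction_on with
      | _ m ih =>
        match m with
        | 0 => intro hm; rw [buildL]
        | k+1 =>
          intro hm
          rw [buildL]
          have hthis := ha ⟨k+1, hm⟩ (Nat.succ_le_succ (Nat.zero_le k))
          have harg : (fun j : Fin (k+1) => a (Fin.castLE (Nat.le_of_lt hm) j))
              = fun j : Fin (k+1) => buildL u f (a ⟨0, hn0⟩) (j : ℕ) := by
            funext j
            exact ih (j : ℕ) j.isLt (lt_trans j.isLt hm)
          rw [harg] at hthis
          simp only [Fin.val_mk] at hthis ⊢
          linear_combination u * hthis - (a ⟨k+1, hm⟩) * (hu - 1)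
    intro i
    exact key (i : ℕ) i.isLt
  -- cardinality of loop set
  have hLcard : L.ncard = r := by
    have hLr : L = Set.range (fun t : R => fun i : Fin n => buildL u f t i) := by
      ext a
      constructor
      · intro ha
        exact ⟨a ⟨0, hn0⟩, (funext fun i => (buildL_uniq a ha i).symm)⟩
      · rintro ⟨t, rfl⟩
        exact buildL_adj t
    have hinj : Function.Injective (fun t : R => fun i : Fin n => buildL u f t i) := by
      intro s t hst
      have h0 := congrFun hst ⟨0, hn0⟩
      simp only at h0
      rwa [buildL_zero, buildL_zero] at h0
    rw [hLr, ← Nat.card_coe_set_eq, Nat.card_range_of_injective hinj,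
      Nat.card_eq_fintype_card]
  -- the set of partners of a
  have hScard : ∀ a : Fin n → R, {b : Fin n → R | gAdj n f a b}.ncard = r := by
    intro a
    have hSr : {b : Fin n → R | gAdj n f a b}
        = Set.range (fun t : R => fun i : Fin n => build n f a t i) := by
      ext b
      constructor
      · intro hb
        exact ⟨b ⟨0, hn0⟩, (funext fun i => (build_uniq a b hb i).symm)⟩
      · rintro ⟨t, rfl⟩
        exact build_adj a t
    have hinj : Function.Injective (fun t : R => fun i : Fin n => build n f a t i) := by
      intro s t hst
      have h0 := congrFun hst ⟨0, hn0⟩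
      simp only at h0
      rwa [build_zero, build_zero] at h0
    rw [hSr, ← Nat.card_coe_set_eq, Nat.card_range_of_injective hinj,
      Nat.card_eq_fintype_card]
  -- symmetry of gAdj
  have hgsym : ∀ a b : Fin n → R, gAdj n f a b → gAdj n f b a := by
    intro a b hab i hi
    rw [add_comm, hsym]
    exact hab i hi
  -- neighbor set description
  have hnbhd : ∀ a : Fin n → R,
      (Gamma R n f).neighborSet a = {b : Fin n → R | gAdj n f a b} \ {a} := by
    intro a
    ext b
    simp only [SimpleGraph.mem_neighborSet, Gamma, SimpleGraph.fromRel_adj,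
      Set.mem_diff, Set.mem_setOf_eq, Set.mem_singleton_iff]
    constructor
    · rintro ⟨hne, h | h⟩
      · exact ⟨h, fun hba => hne (hba ▸ rfl)⟩
      · exact ⟨hgsym b a h, fun hba => hne (hba ▸ rfl)⟩
    · rintro ⟨h, hne⟩
      exact ⟨fun hab => hne hab.symm, Or.inl h⟩
  -- degree of a vertex
  have hdeg : ∀ a : Fin n → R,
      ((Gamma R n f).neighborSet a).ncard = if a ∈ L then r - 1 else r := by
    intro a
    rw [hnbhd a]
    by_cases ha : a ∈ L
    · rw [if_pos ha, Set.ncard_diff_singleton_of_mem (show a ∈ {b : Fin n → R | gAdj n f a b} from ha), hScard a]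
    · rw [if_neg ha, Set.diff_singleton_eq_self (show a ∉ {b : Fin n → R | gAdj n f a b} from ha), hScard a]
  refine ⟨hLcard, ?_, ?_⟩
  · have hset : {a : Fin n → R | ((Gamma R n f).neighborSet a).ncard = r - 1} = L := by
      ext a
      simp only [Set.mem_setOf_eq, hdeg a]
      by_cases ha : a ∈ L
      · simp [ha]
      · simp only [if_neg ha]
        constructor
        · intro h; omega
        · intro h; exact absurd h ha
    rw [hset, hLcard]
  · have hset : {a : Fin n → R | ((Gamma R n f).neighborSet a).ncard = r} = Lᶜ := by
      ext a
      simp only [Set.mem_setOf_eq, Set.mem_compl_iff, hdeg a]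
      by_cases ha : a ∈ L
      · simp only [if_pos ha]
        constructor
        · intro h; omega
        · intro h; exact absurd ha h
      · simp [ha]
    rw [hset]
    have hcompl := Set.ncard_add_ncard_compl L (Set.toFinite _) (Set.toFinite _)
    have hcard : Nat.card (Fin n → R) = r ^ n := by
      rw [Nat.card_eq_fintype_card, Fintype.card_fun, Fintype.card_fin]
    omega
end

section
/- Let R be a finite nonzero commutative ring with identity in which 2 is a unit, |R| = r, let n ≥ 2, and let f_i : R^{2i-2} → R for 2 ≤ i ≤ n be symmetric functions. Then the complete graph K_{r^n} admits an edge-decomposition by the loopless graph Γ(R; f_2,…,f_n): there is a collection of subgraphs of K_{r^n}, each isomorphic to Γ(R; f_2,…,f_n), whose edge sets partition the edge set of K_{r^n}. -/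
/-- The canonical translation making `u, v` adjacent in a translate of `Γ`. -/
def tAux {R : Type} [CommRing R] (inv2 : R) (n : ℕ)
    (f : (i : ℕ) → (Fin i → R) → (Fin i → R) → R)
    (u v : Fin n → R) : ℕ → R
  | k =>
    if h : 1 ≤ k ∧ k < n then
      inv2 * (u ⟨k, h.2⟩ + v ⟨k, h.2⟩ -
        f k (fun j : Fin k => u ⟨j, lt_trans j.isLt h.2⟩ - tAux inv2 n f u v j)
            (fun j : Fin k => v ⟨j, lt_trans j.isLt h.2⟩ - tAux inv2 n f u v j))
    else 0
  termination_by k => k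
  decreasing_by all_goals exact j.isLt

lemma gAdj_symm {R : Type} [CommRing R] (n : ℕ)
    (f : (i : ℕ) → (Fin i → R) → (Fin i → R) → R)
    (hsym : ∀ (i : ℕ) (x y : Fin i → R), f i x y = f i y x)
    (a b : Fin n → R) (h : gAdj n f a b) : gAdj n f b a := by
  intro i hi
  rw [add_comm, hsym]
  exact h i hi

lemma key {R : Type} [CommRing R] (inv2 : R) (h2 : 2 * inv2 = 1) (n : ℕ)
    (f : (i : ℕ) → (Fin i → R) → (Fin i → R) → R)
    (u v : Fin n → R) :
    ∃! t : Fin n → R, (∀ i : Fin n, (i : ℕ) = 0 → t i = 0) ∧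
      gAdj n f (u - t) (v - t) := by
  set t : Fin n → R := fun i => tAux inv2 n f u v i.val with ht
  have hinv : ∀ x : R, 2 * (inv2 * x) = x := by
    intro x; rw [← mul_assoc, h2, one_mul]
  refine ⟨t, ⟨?_, ?_⟩, ?_⟩
  · intro i hi
    simp only [ht, hi]
    rw [tAux]
    simp
  · intro i hi
    simp only [Pi.sub_apply, ht]
    have hunfold : tAux inv2 n f u v i.val =
        inv2 * (u i + v i -
          f i (fun j : Fin i => u ⟨j, lt_trans j.isLt i.isLt⟩ - tAux inv2 n f u v j)
              (fun j : Fin i => v ⟨j, lt_trans j.isLt i.isLt⟩ - tAux inv2 n f u v j)) := by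
      rw [tAux]
      simp only [dif_pos (And.intro hi i.isLt), Fin.eta]
    have hcast : ∀ (a : Fin n → R) (j : Fin i),
        a (Fin.castLE i.isLt.le j) = a ⟨j, lt_trans j.isLt i.isLt⟩ := by
      intro a j; rfl
    have hfix : (fun j : Fin i => (u (Fin.castLE i.isLt.le j) - t (Fin.castLE i.isLt.le j)))
        = fun j : Fin i => u ⟨j, lt_trans j.isLt i.isLt⟩ - tAux inv2 n f u v j := rfl
    calc u i - tAux inv2 n f u v ↑i + (v i - tAux inv2 n f u v ↑i)
        = u i + v i - 2 * tAux inv2 n f u v ↑i := by ring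
      _ = _ := by rw [hunfold, hinv]; ring_nf; rfl
  · rintro t' ⟨ht'0, ht'⟩
    funext i
    -- strong induction on i.val
    suffices H : ∀ k : ℕ, ∀ hk : k < n, t' ⟨k, hk⟩ = tAux inv2 n f u v k by
      have := H i.val i.isLt
      simpa [ht, Fin.eta] using this
    intro k
    induction k using Nat.strong_induction_on with
    | _ k ih =>
      intro hk
      by_cases hk1 : 1 ≤ k
      · have hadj := ht' ⟨k, hk⟩ hk1
        simp only [Pi.sub_apply] at hadj
        have hpre : (fun j : Fin k => u (Fin.castLE hk.le j) - t' (Fin.castLE hk.le j))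
            = fun j : Fin k => u ⟨j, lt_trans j.isLt hk⟩ - tAux inv2 n f u v j := by
          funext j
          rw [show t' (Fin.castLE hk.le j) = tAux inv2 n f u v ↑j from
            ih j j.isLt (lt_trans j.isLt hk)]
          rfl
        have hpre' : (fun j : Fin k => v (Fin.castLE hk.le j) - t' (Fin.castLE hk.le j))
            = fun j : Fin k => v ⟨j, lt_trans j.isLt hk⟩ - tAux inv2 n f u v j := by
          funext j
          rw [show t' (Fin.castLE hk.le j) = tAux inv2 n f u v ↑j from
            ih j j.isLt (lt_trans j.isLt hk)]
          rfl
        rw [hpre, hpre'] at hadj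
        rw [tAux, dif_pos (And.intro hk1 hk)]
        have h2t : (2 : R) * t' ⟨k, hk⟩ = u ⟨k, hk⟩ + v ⟨k, hk⟩ -
            f k (fun j : Fin k => u ⟨j, lt_trans j.isLt hk⟩ - tAux inv2 n f u v j)
                (fun j : Fin k => v ⟨j, lt_trans j.isLt hk⟩ - tAux inv2 n f u v j) := by
          rw [← hadj]; ring
        have := congrArg (fun x => inv2 * x) h2t
        simpa [← mul_assoc, mul_comm inv2 2, h2] using this
      · have : k = 0 := by omega
        subst this
        rw [tAux]
        simp only [show ¬(1 ≤ 0 ∧ 0 < n) by omega, dif_neg, not_false_iff]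
        exact ht'0 ⟨0, hk⟩ rfl

/-- If `2` is a unit in the finite ring `R` with `|R| = r` and the `f_i` are symmetric, then
the complete graph `K_{r^n}` admits an edge-decomposition into copies of the loopless graph
`Γ(R; f₂,…,f_n)`. -/
theorem statement_6 (R : Type) [CommRing R] [Nontrivial R] [Fintype R]
    (h2 : IsUnit (2 : R)) (n : ℕ) (hn : 2 ≤ n)
    (f : (i : ℕ) → (Fin i → R) → (Fin i → R) → R)
    (hsym : ∀ (i : ℕ) (x y : Fin i → R), f i x y = f i y x) :
    ∃ (ι : Type) (c : ι → SimpleGraph (Fin (Fintype.card R ^ n))),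
      (∀ i, c i ≤ SimpleGraph.completeGraph (Fin (Fintype.card R ^ n))) ∧
      (∀ i, Nonempty (c i ≃g Gamma R n f)) ∧
      (∀ e : Sym2 (Fin (Fintype.card R ^ n)),
        e ∈ (SimpleGraph.completeGraph (Fin (Fintype.card R ^ n))).edgeSet ↔
          ∃! i, e ∈ (c i).edgeSet) := by
  obtain ⟨inv2, hinv2⟩ := h2.exists_right_inv
  have hcard : Fintype.card (Fin n → R) = Fintype.card R ^ n := by
    simp [Fintype.card_fun]
  let ε : Fin (Fintype.card R ^ n) ≃ (Fin n → R) :=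
    (Fintype.equivFinOfCardEq hcard).symm
  refine ⟨{t : Fin n → R // ∀ i : Fin n, (i : ℕ) = 0 → t i = 0},
    fun t => (Gamma R n f).comap (fun x => ε x - t.val), ?_, ?_, ?_⟩
  · intro t a b hab
    simp only [SimpleGraph.comap_adj] at hab
    have hne := hab.ne
    exact fun h => hne (by rw [h])
  · intro t
    exact ⟨⟨ε.trans (Equiv.subRight t.val), Iff.rfl⟩⟩
  · intro e
    induction e using Sym2.ind with
    | _ x y =>
      simp only [SimpleGraph.mem_edgeSet, SimpleGraph.completeGraph_eq_top, SimpleGraph.top_adj,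
        SimpleGraph.comap_adj]
      constructor
      · intro hxy
        have huv : ε x ≠ ε y := fun h => hxy (ε.injective h)
        obtain ⟨t, ⟨ht0, htadj⟩, huniq⟩ := key inv2 hinv2 n f (ε x) (ε y)
        refine ⟨⟨t, ht0⟩, ?_, ?_⟩
        · show (Gamma R n f).Adj (ε x - t) (ε y - t)
          rw [Gamma, SimpleGraph.fromRel_adj]
          exact ⟨fun h => huv (sub_left_inj.mp h), Or.inl htadj⟩
        · rintro ⟨t', ht'0⟩ hadj
          have : (Gamma R n f).Adj (ε x - t') (ε y - t') := hadj
          rw [Gamma, SimpleGraph.fromRel_adj] at this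
          obtain ⟨-, hor⟩ := this
          have hg : gAdj n f (ε x - t') (ε y - t') := by
            rcases hor with h | h
            · exact h
            · exact gAdj_symm n f hsym _ _ h
          exact Subtype.ext (huniq t' ⟨ht'0, hg⟩)
      · rintro ⟨t, hadj, -⟩
        have : (Gamma R n f).Adj (ε x - t.val) (ε y - t.val) := hadj
        intro h
        subst h
        exact this.ne rfl
end

section
/- Let q be a prime power and m ≥ 1. If 1 ≤ m ≤ q−1, then the Wenger graph W_m(q) is connected. If m ≥ q, then W_m(q) is disconnected and has exactly q^{m−q+1} connected components, each of which is isomorphic to W_{q−1}(q). -/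
/-- The Wenger adjacency condition: a point `p` and a line `l` in `F^{m+1}` (0-indexed)
are adjacent iff `l_{k+1} + p_{k+1} = p_1 l_k` for all `1 ≤ k ≤ m`. -/
def wengerAdj {F : Type} [Field F] (m : ℕ) (p l : Fin (m + 1) → F) : Prop :=
  ∀ k : Fin m, l k.succ + p k.succ = p 0 * l k.castSucc

/-- The Wenger graph `W_m(q)`, a bipartite graph on two copies of `F_q^{m+1}`. -/
def Wenger (F : Type) [Field F] (m : ℕ) :
    SimpleGraph ((Fin (m + 1) → F) ⊕ (Fin (m + 1) → F)) :=
  SimpleGraph.fromRel (fun x y => ∃ p l, x = Sum.inl p ∧ y = Sum.inr l ∧ wengerAdj m p l)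

namespace WG
open SimpleGraph Finset
variable {F : Type} [Field F] {m : ℕ}

lemma adj_inl_inr {p l : Fin (m+1) → F} (h : wengerAdj m p l) :
    (Wenger F m).Adj (Sum.inl p) (Sum.inr l) := by
  rw [Wenger, SimpleGraph.fromRel_adj]
  exact ⟨by simp, Or.inl ⟨p, l, rfl, rfl, h⟩⟩

lemma adj_iff {x y : (Fin (m+1) → F) ⊕ (Fin (m+1) → F)} :
    (Wenger F m).Adj x y ↔
      (∃ p l, x = Sum.inl p ∧ y = Sum.inr l ∧ wengerAdj m p l) ∨
      (∃ p l, y = Sum.inl p ∧ x = Sum.inr l ∧ wengerAdj m p l) := by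
  rw [Wenger, SimpleGraph.fromRel_adj]
  constructor
  · rintro ⟨-, h⟩; exact h
  · rintro (⟨p, l, hx, hy, h⟩ | ⟨p, l, hy, hx, h⟩) <;> subst hx <;> subst hy
    · exact ⟨by simp, Or.inl ⟨p, l, rfl, rfl, h⟩⟩
    · exact ⟨by simp, Or.inr ⟨p, l, rfl, rfl, h⟩⟩

lemma adj_inl_inr_iff {p l : Fin (m+1) → F} :
    (Wenger F m).Adj (Sum.inl p) (Sum.inr l) ↔ wengerAdj m p l := by
  rw [adj_iff]
  constructor
  · rintro (⟨p', l', hp, hl, h⟩ | ⟨p', l', hp, hl, h⟩)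
    · cases hp; cases hl; exact h
    · cases hl
  · intro h; exact Or.inl ⟨p, l, rfl, rfl, h⟩

/-- point with first coordinate `x` and rest `∑ j ∈ J, μ j * c j ^ (i-1)`. -/
def ptv (m : ℕ) (x : F) (μ c : ℕ → F) (J : Finset ℕ) : Fin (m+1) → F :=
  fun i => if i.val = 0 then x else ∑ j ∈ J, μ j * c j ^ (i.val - 1)

def lnv (m : ℕ) (μ c : ℕ → F) (J : Finset ℕ) : Fin (m+1) → F :=
  fun i => ∑ j ∈ J, μ j * c j ^ i.val

lemma ptv_adj (x : F) (μ c : ℕ → F) (J : Finset ℕ) (hc : ∀ j ∈ J, c j ≠ x) :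
    wengerAdj m (ptv m x μ c J) (lnv m (fun j => μ j / (x - c j)) c J) := by
  intro k
  have h0 : ((0 : Fin (m+1)) : ℕ) = 0 := rfl
  simp only [ptv, lnv, Fin.val_succ, Fin.coe_castSucc, h0, if_pos rfl, Nat.add_sub_cancel,
    Nat.succ_ne_zero, if_neg (Nat.succ_ne_zero _), if_true, if_false]
  rw [← Finset.sum_add_distrib, Finset.mul_sum]
  refine Finset.sum_congr rfl fun j hj => ?_
  have hne : x - c j ≠ 0 := sub_ne_zero.mpr (hc j hj).symm
  field_simp
  ring

lemma ptv_adj' (x b : F) (μ c : ℕ → F) (J : Finset ℕ) (hc : ∀ j ∈ J, c j ≠ x) :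
    wengerAdj m (ptv m b (fun j => μ j * (b - c j) / (x - c j)) c J)
      (lnv m (fun j => μ j / (x - c j)) c J) := by
  intro k
  have h0 : ((0 : Fin (m+1)) : ℕ) = 0 := rfl
  simp only [ptv, lnv, Fin.val_succ, Fin.coe_castSucc, h0, if_pos rfl, Nat.add_sub_cancel,
    Nat.succ_ne_zero, if_neg (Nat.succ_ne_zero _), if_true, if_false]
  rw [← Finset.sum_add_distrib, Finset.mul_sum]
  refine Finset.sum_congr rfl fun j hj => ?_
  have hne : x - c j ≠ 0 := sub_ne_zero.mpr (hc j hj).symm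
  field_simp
  ring

lemma step (x b : F) (μ c : ℕ → F) (J : Finset ℕ) (hc : ∀ j ∈ J, c j ≠ x) :
    (Wenger F m).Reachable (Sum.inl (ptv m x μ c J))
      (Sum.inl (ptv m b (fun j => μ j * (b - c j) / (x - c j)) c J)) :=
  ((adj_inl_inr (ptv_adj x μ c J hc)).reachable).trans
    ((adj_inl_inr (ptv_adj' x b μ c J hc)).reachable).symm

-- continuing inside namespace WG (will be concatenated)
section Walkdown
variable (a : ℕ → F)

lemma walkdown (hinj : ∀ i j, i ≤ m → j ≤ m → a i = a j → i = j) :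
    ∀ d k, k + d = m → ∀ ν : ℕ → F,
      (Wenger F m).Reachable (Sum.inl (ptv m (a k) ν a (Finset.Icc (k+1) m)))
        (Sum.inl (ptv m (a m) ν a (Finset.Icc (m+1) m))) := by
  intro d
  induction d with
  | zero =>
    intro k hk ν
    subst hk
    simp only [Nat.add_zero]
    exact SimpleGraph.Reachable.refl _
  | succ d ih =>
    intro k hk ν
    have hkm : k < m := by omega
    have hc : ∀ j ∈ Finset.Icc (k+1) m, a j ≠ a k := by
      intro j hj
      simp only [Finset.mem_Icc] at hj
      intro h
      have := hinj j k (by omega) (by omega) h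
      omega
    refine (step (a k) (a (k+1)) ν a _ hc).trans ?_
    have hveq : (ptv m (a (k+1)) (fun j => ν j * (a (k+1) - a j) / (a k - a j)) a
        (Finset.Icc (k+1) m)) =
        ptv m (a (k+1)) (fun j => ν j * (a (k+1) - a j) / (a k - a j)) a
        (Finset.Icc (k+1+1) m) := by
      funext i
      simp only [ptv]
      split
      · rfl
      · have hmem : k + 1 ∈ Finset.Icc (k+1) m := by simp [Finset.mem_Icc]; omega
        rw [← Finset.sum_erase_add _ _ hmem]
        have herase : (Finset.Icc (k+1) m).erase (k+1) = Finset.Icc (k+1+1) m := by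
          ext t; simp [Finset.mem_erase, Finset.mem_Icc]
        rw [herase]
        simp
    rw [hveq]
    have hend : ptv m (a m) (fun j => ν j * (a (k+1) - a j) / (a k - a j)) a
        (Finset.Icc (m+1) m) = ptv m (a m) ν a (Finset.Icc (m+1) m) := by
      funext i
      simp [ptv, Finset.Icc_eq_empty (by omega : ¬ m + 1 ≤ m)]
    rw [← hend]
    exact ih (k+1) (by omega) (fun j => ν j * (a (k+1) - a j) / (a k - a j))

end Walkdown

section Vandermonde

lemma exists_coeffs {mm : ℕ} (c : Fin mm → F) (hc : Function.Injective c) (v : Fin mm → F) :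
    ∃ μ : Fin mm → F, ∀ i : Fin mm, ∑ j, μ j * c j ^ (i : ℕ) = v i := by
  classical
  set M : Matrix (Fin mm) (Fin mm) F := fun i j => c j ^ (i : ℕ) with hM
  have hdet : M.det ≠ 0 := by
    have hMt : M = (Matrix.vandermonde c).transpose := by
      ext i j
      rw [Matrix.transpose_apply, Matrix.vandermonde_apply]
    rw [hMt, Matrix.det_transpose, Matrix.det_vandermonde]
    refine Finset.prod_ne_zero_iff.mpr fun i _ => Finset.prod_ne_zero_iff.mpr fun j hj =>
      sub_ne_zero.mpr fun h => ?_
    exact (ne_of_gt (Finset.mem_Ioi.mp hj)) (hc h)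
  refine ⟨M⁻¹.mulVec v, fun i => ?_⟩
  have : M.mulVec (M⁻¹.mulVec v) = v := by
    rw [Matrix.mulVec_mulVec, Matrix.mul_nonsing_inv M (isUnit_iff_ne_zero.mpr hdet),
      Matrix.one_mulVec]
  have hi := congrFun this i
  rw [← hi]
  simp [Matrix.mulVec, dotProduct, hM, mul_comm]

end Vandermonde

section Connect
variable [Fintype F]

/-- the natural-number extension of a vertex vector -/
def nf (p : Fin (m+1) → F) : ℕ → F := fun t => if h : t < m + 1 then p ⟨t, h⟩ else 0

/-- a line adjacent to a given point, with `l 0 = 0` -/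
def lineOf (p : Fin (m+1) → F) : ℕ → F
  | 0 => 0
  | (k+1) => p 0 * lineOf p k - nf p (k+1)

lemma lineOf_adj (p : Fin (m+1) → F) :
    wengerAdj m p (fun i => lineOf p i.val) := by
  intro k
  have : lineOf p (k.val + 1) = p 0 * lineOf p k.val - nf p (k.val+1) := rfl
  simp only [Fin.val_succ, Fin.coe_castSucc, this, nf]
  rw [dif_pos (by omega : k.val + 1 < m + 1)]
  have : p ⟨k.val+1, by omega⟩ = p k.succ := by congr 1
  rw [this]; ring

/-- the point with first coordinate `x` adjacent to line `l` -/
def ptOf (x : F) (l : Fin (m+1) → F) : Fin (m+1) → F :=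
  fun i => if i.val = 0 then x
    else x * l ⟨i.val - 1, Nat.lt_of_le_of_lt (Nat.sub_le _ _) i.isLt⟩ - l i

lemma ptOf_adj (x : F) (l : Fin (m+1) → F) : wengerAdj m (ptOf x l) l := by
  intro k
  simp only [ptOf]
  rw [if_neg (by simp : ¬ ((k.succ : Fin (m+1)) : ℕ) = 0),
    if_pos (show ((0 : Fin (m+1)) : ℕ) = 0 from rfl)]
  have h1 : (⟨((k.succ : Fin (m+1)) : ℕ) - 1,
      Nat.lt_of_le_of_lt (Nat.sub_le _ _) (k.succ : Fin (m+1)).isLt⟩ : Fin (m+1)) =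
      k.castSucc := by
    apply Fin.ext; simp
  rw [h1]; ring

lemma reach_hub (hcard : m + 1 ≤ Fintype.card F) (v : (Fin (m+1) → F) ⊕ (Fin (m+1) → F)) :
    ∃ b : F, (Wenger F m).Reachable v (Sum.inl (fun i => if i.val = 0 then b else 0)) := by
  classical
  obtain ⟨e⟩ := Function.Embedding.nonempty_of_card_le
    (by simpa using hcard : Fintype.card (Fin (m+1)) ≤ Fintype.card F)
  set a : ℕ → F := fun t => if h : t ≤ m then e ⟨t, by omega⟩ else e 0 with ha
  have hinj : ∀ i j, i ≤ m → j ≤ m → a i = a j → i = j := by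
    intro i j hi hj h
    rw [ha] at h
    simp only [dif_pos hi, dif_pos hj] at h
    have h2 := congrArg Fin.val (e.injective h)
    simpa using h2
  -- a line adjacent to v, then a point with first coordinate (a 0)
  obtain ⟨l, hl⟩ : ∃ l : Fin (m+1) → F, (Wenger F m).Reachable v (Sum.inr l) := by
    cases v with
    | inl p => exact ⟨fun i => lineOf p i.val, (adj_inl_inr (lineOf_adj p)).reachable⟩
    | inr l => exact ⟨l, SimpleGraph.Reachable.refl _⟩
  set p' := ptOf (a 0) l with hp'
  have hr1 : (Wenger F m).Reachable v (Sum.inl p') :=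
    hl.trans (adj_inl_inr (ptOf_adj (a 0) l)).reachable.symm
  -- write p' in Vandermonde form
  obtain ⟨μ, hμ⟩ := exists_coeffs (fun j : Fin m => a (j.val + 1))
    (by
      intro i j h
      have := hinj (i.val+1) (j.val+1) (by omega) (by omega) h
      exact Fin.ext (by omega))
    (fun i : Fin m => p' ⟨i.val + 1, by omega⟩)
  set ν : ℕ → F := fun t => if h : 1 ≤ t ∧ t ≤ m then μ ⟨t - 1, by omega⟩ else 0 with hν
  have hform : p' = ptv m (a 0) ν a (Finset.Icc 1 m) := by
    funext i
    simp only [ptv]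
    split
    · next h => simp only [hp', ptOf]; rw [if_pos h]
    · next h =>
      have h1 : 1 ≤ i.val := by omega
      have := hμ ⟨i.val - 1, by omega⟩
      have hival : (⟨(i.val - 1) + 1, by omega⟩ : Fin (m+1)) = i :=
        Fin.ext (by omega : (i.val - 1) + 1 = i.val)
      rw [hival] at this
      rw [← this]
      have hIcc : ∑ t ∈ Finset.Icc 1 m, ν t * a t ^ (i.val - 1)
          = ∑ r ∈ Finset.range m, ν (1 + r) * a (1 + r) ^ (i.val - 1) := by
        have h1 : Finset.Icc 1 m = Finset.Ico 1 (m+1) := by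
          ext t; simp [Finset.mem_Icc, Finset.mem_Ico]
        rw [h1, Finset.sum_Ico_eq_sum_range]
        simp
      rw [hIcc, ← Fin.sum_univ_eq_sum_range (fun r => ν (1 + r) * a (1 + r) ^ (i.val - 1)) m]
      refine Finset.sum_congr rfl fun j _ => ?_
      have hν1 : ν (1 + j.val) = μ j := by
        simp only [hν]
        rw [dif_pos ⟨by omega, by omega⟩]
        exact congrArg μ (Fin.ext (by omega : 1 + j.val - 1 = j.val))
      rw [hν1, Nat.add_comm 1 j.val]
  refine ⟨a m, ?_⟩
  have hwd := walkdown a hinj m 0 (by omega) ν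
  rw [← hform] at hwd
  have hfinal : ptv m (a m) ν a (Finset.Icc (m+1) m) =
      (fun i : Fin (m+1) => if i.val = 0 then a m else 0) := by
    funext i
    simp [ptv, Finset.Icc_eq_empty (by omega : ¬ m + 1 ≤ m)]
  rw [hfinal] at hwd
  exact hr1.trans hwd

lemma connected_of_le (hcard : m + 1 ≤ Fintype.card F) : (Wenger F m).Connected := by
  rw [SimpleGraph.connected_iff]
  refine ⟨fun u v => ?_, ⟨Sum.inr 0⟩⟩
  obtain ⟨b, hb⟩ := reach_hub hcard u
  obtain ⟨b', hb'⟩ := reach_hub hcard v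
  refine hb.trans (.trans ?_ hb'.symm)
  -- both hub points adjacent to the zero line
  have hz : ∀ x : F, wengerAdj m (fun i : Fin (m+1) => if i.val = 0 then x else 0)
      (0 : Fin (m+1) → F) := by
    intro x k
    simp [Fin.val_succ]
  exact (adj_inl_inr (hz b)).reachable.trans (adj_inl_inr (hz b')).reachable.symm

end Connect
section Part2
open Finset

lemma nf_lt {m : ℕ} (p : Fin (m+1) → F) {t : ℕ} (h : t < m + 1) : nf p t = p ⟨t, h⟩ :=
  dif_pos h

lemma wengerAdj_iff_nat {m : ℕ} {p l : Fin (m+1) → F} :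
    wengerAdj m p l ↔ ∀ k, 1 ≤ k → k ≤ m → nf l k + nf p k = p 0 * nf l (k-1) := by
  constructor
  · intro h k h1 h2
    have h3 := h ⟨k-1, by omega⟩
    rw [nf_lt _ (by omega : k < m+1), nf_lt _ (by omega : k < m+1),
      nf_lt _ (by omega : k - 1 < m+1)]
    have e1 : ((⟨k-1, by omega⟩ : Fin m).succ : Fin (m+1)) = ⟨k, by omega⟩ :=
      Fin.ext (by omega : (k-1) + 1 = k)
    have e2 : ((⟨k-1, by omega⟩ : Fin m).castSucc : Fin (m+1)) = ⟨k-1, by omega⟩ :=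
      Fin.ext rfl
    rw [e1, e2] at h3
    exact h3
  · intro h k
    have h3 := h (k.val + 1) (by omega) (by omega)
    rw [nf_lt _ (by omega : k.val + 1 < m+1), nf_lt _ (by omega : k.val + 1 < m+1),
      nf_lt _ (by omega : k.val + 1 - 1 < m+1)] at h3
    have e1 : (⟨k.val + 1, by omega⟩ : Fin (m+1)) = k.succ := Fin.ext rfl
    have e2 : (⟨k.val + 1 - 1, by omega⟩ : Fin (m+1)) = k.castSucc :=
      Fin.ext (by omega : k.val + 1 - 1 = k.val)
    rw [e1, e2] at h3
    exact h3

variable (Q n : ℕ)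

/-- truncation to the first `Q+1` coordinates -/
def trunc (v : Fin (Q+n+1) → F) : Fin (Q+1) → F := fun i => nf v i.val

/-- the invariant of a point -/
def chiP (p : Fin (Q+n+1) → F) : Fin n → F :=
  fun j => (∑ i ∈ Finset.range (Q+1), p 0 ^ (Q - i) * nf p (j.val+1+i)) - nf p (j.val+1)

/-- the invariant of a line -/
def chiL (l : Fin (Q+n+1) → F) : Fin n → F :=
  fun j => nf l (j.val+1) - nf l (j.val+1+Q)

variable {Q n}

lemma trunc_zero (v : Fin (Q+n+1) → F) : trunc Q n v 0 = v 0 := by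
  have : nf v 0 = v ⟨0, by omega⟩ := nf_lt _ (by omega)
  rw [trunc]
  exact this.trans (congrArg v (Fin.ext rfl))

lemma nf_trunc (v : Fin (Q+n+1) → F) {t : ℕ} (h : t < Q + 1) :
    nf (trunc Q n v) t = nf v t := by
  rw [nf_lt _ h, trunc]

/-- truncation preserves adjacency -/
lemma trunc_adj {p l : Fin (Q+n+1) → F} (h : wengerAdj (Q+n) p l) :
    wengerAdj Q (trunc Q n p) (trunc Q n l) := by
  rw [wengerAdj_iff_nat] at h ⊢
  intro k h1 h2
  rw [nf_trunc _ (by omega), nf_trunc _ (by omega), nf_trunc _ (by omega), trunc_zero]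
  exact h k h1 (by omega)

section Fin2

variable [Fintype F] (hQcard : Q + 1 = Fintype.card F)
include hQcard

lemma pow_Q1 (a : F) : a ^ (Q + 1) = a := by
  rw [hQcard]; exact FiniteField.pow_card a

/-- adjacent vertices have equal invariants -/
lemma chi_adj {p l : Fin (Q+n+1) → F} (h : wengerAdj (Q+n) p l) :
    chiP Q n p = chiL Q n l := by
  have hrel := wengerAdj_iff_nat.mp h
  funext j
  have hj := j.isLt
  set a := p 0 with ha
  have hsum : ∑ i ∈ Finset.range (Q+1), a ^ (Q - i) * nf p (j.val+1+i)
      = a ^ (Q+1) * nf l j.val - nf l (j.val+1+Q) := by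
    calc ∑ i ∈ Finset.range (Q+1), a ^ (Q - i) * nf p (j.val+1+i)
        = ∑ i ∈ Finset.range (Q+1), ((fun i => a ^ (Q+1-i) * nf l (j.val+i)) i
            - (fun i => a ^ (Q+1-i) * nf l (j.val+i)) (i+1)) := by
          refine Finset.sum_congr rfl fun i hi => ?_
          rw [Finset.mem_range] at hi
          have hr := hrel (j.val+1+i) (by omega) (by omega)
          have hidx : j.val+1+i-1 = j.val+i := by omega
          rw [hidx] at hr
          have hp : nf p (j.val+1+i) = a * nf l (j.val+i) - nf l (j.val+1+i) := by
            linear_combination hr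
          have he1 : Q+1-i = (Q-i)+1 := by omega
          have he2 : j.val+(i+1) = j.val+1+i := by omega
          have he4 : Q+1-(i+1) = Q-i := by omega
          simp only [hp, he1, he2, he4, pow_succ]
          ring
      _ = a ^ (Q+1-0) * nf l (j.val+0) - a ^ (Q+1-(Q+1)) * nf l (j.val+(Q+1)) :=
          Finset.sum_range_sub' (fun i => a ^ (Q+1-i) * nf l (j.val+i)) (Q+1)
      _ = a ^ (Q+1) * nf l j.val - nf l (j.val+1+Q) := by
          rw [Nat.sub_self, pow_zero, one_mul, show j.val+(Q+1) = j.val+1+Q by omega]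
          simp
  have h1 := hrel (j.val+1) (by omega) (by omega)
  have hidx1 : j.val+1-1 = j.val := by omega
  rw [hidx1] at h1
  have hpow := pow_Q1 hQcard a
  rw [chiP, chiL]
  simp only [← ha]
  rw [hsum]
  linear_combination nf l j.val * hpow - h1

/-- invariants and truncated adjacency imply adjacency -/
lemma adj_of_trunc (hQ1 : 1 ≤ Q) {p l : Fin (Q+n+1) → F}
    (ht : wengerAdj Q (trunc Q n p) (trunc Q n l))
    (hchi : chiP Q n p = chiL Q n l) : wengerAdj (Q+n) p l := by
  rw [wengerAdj_iff_nat] at ht ⊢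
  set a := p 0 with ha
  intro k
  induction k using Nat.strong_induction_on with
  | _ k IH =>
    intro h1 h2
    by_cases hk : k ≤ Q
    · have := ht k h1 hk
      rw [nf_trunc _ (by omega), nf_trunc _ (by omega), nf_trunc _ (by omega),
        trunc_zero] at this
      exact this
    · obtain ⟨j, rfl⟩ : ∃ j, k = j+1+Q := ⟨k-Q-1, by omega⟩
      have hjn : j < n := by omega
      have hchij := congrFun hchi ⟨j, hjn⟩
      rw [chiP, chiL] at hchij
      simp only [Fin.val_mk] at hchij
      rw [Finset.sum_range_succ] at hchij
      have hsum : ∑ i ∈ Finset.range Q, a ^ (Q - i) * nf p (j+1+i)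
          = a ^ (Q+1) * nf l j - a * nf l (j+Q) := by
        calc ∑ i ∈ Finset.range Q, a ^ (Q - i) * nf p (j+1+i)
            = ∑ i ∈ Finset.range Q, ((fun i => a ^ (Q+1-i) * nf l (j+i)) i
                - (fun i => a ^ (Q+1-i) * nf l (j+i)) (i+1)) := by
              refine Finset.sum_congr rfl fun i hi => ?_
              rw [Finset.mem_range] at hi
              have hr := IH (j+1+i) (by omega) (by omega) (by omega)
              have hidx : j+1+i-1 = j+i := by omega
              rw [hidx] at hr
              have hp : nf p (j+1+i) = a * nf l (j+i) - nf l (j+1+i) := by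
                linear_combination hr
              have he1 : Q+1-i = (Q-i)+1 := by omega
              have he2 : j+(i+1) = j+1+i := by omega
              have he4 : Q+1-(i+1) = Q-i := by omega
              simp only [hp, he1, he2, he4, pow_succ]
              ring
          _ = a ^ (Q+1-0) * nf l (j+0) - a ^ (Q+1-Q) * nf l (j+Q) :=
              Finset.sum_range_sub' (fun i => a ^ (Q+1-i) * nf l (j+i)) Q
          _ = a ^ (Q+1) * nf l j - a * nf l (j+Q) := by
              rw [show Q+1-Q = 1 by omega, pow_one]
              simp
      have hr1 := IH (j+1) (by omega) (by omega) (by omega)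
      have hidx1 : j+1-1 = j := by omega
      rw [hidx1] at hr1
      have hpow := pow_Q1 hQcard a
      have hidx2 : j+1+Q-1 = j+Q := by omega
      have hQsub : Q - Q = 0 := by omega
      rw [hQsub, pow_zero, one_mul, ← ha] at hchij
      rw [hidx2]
      linear_combination hchij - hsum + hr1 - nf l j * hpow
end Fin2

end Part2
section Lifts
open Finset
variable {Q n : ℕ}

/-- recursive extension of a point from its first `Q+1` coordinates and invariant -/
def liftP (Q : ℕ) (hQ : 1 ≤ Q) (a : F) (pb d : ℕ → F) (i : ℕ) : F :=
  if h : i < Q + 1 then pb i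
  else d (i - Q - 1) + liftP Q hQ a pb d (i - Q - 1 + 1)
    - ∑ t : Fin Q, a ^ (Q - t.val) * liftP Q hQ a pb d (i - Q - 1 + 1 + t.val)
termination_by i
decreasing_by
  · omega
  · have := t.isLt; omega

/-- recursive extension of a line from its first `Q+1` coordinates and invariant -/
def liftL (Q : ℕ) (hQ : 1 ≤ Q) (lb c : ℕ → F) (i : ℕ) : F :=
  if h : i < Q + 1 then lb i
  else liftL Q hQ lb c (i - Q - 1 + 1) - c (i - Q - 1)
termination_by i
decreasing_by omega

lemma liftP_lt (hQ : 1 ≤ Q) (a : F) (pb d : ℕ → F) {i : ℕ} (h : i < Q + 1) :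
    liftP Q hQ a pb d i = pb i := by rw [liftP, dif_pos h]

lemma liftP_ge (hQ : 1 ≤ Q) (a : F) (pb d : ℕ → F) {j : ℕ} :
    liftP Q hQ a pb d (j + 1 + Q) = d j + liftP Q hQ a pb d (j + 1)
      - ∑ t : Fin Q, a ^ (Q - t.val) * liftP Q hQ a pb d (j + 1 + t.val) := by
  rw [liftP, dif_neg (by omega : ¬ j + 1 + Q < Q + 1)]
  rw [show j + 1 + Q - Q - 1 = j by omega]

lemma liftL_lt (hQ : 1 ≤ Q) (lb c : ℕ → F) {i : ℕ} (h : i < Q + 1) :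
    liftL Q hQ lb c i = lb i := by rw [liftL, dif_pos h]

lemma liftL_ge (hQ : 1 ≤ Q) (lb c : ℕ → F) {j : ℕ} :
    liftL Q hQ lb c (j + 1 + Q) = liftL Q hQ lb c (j + 1) - c j := by
  rw [liftL, dif_neg (by omega : ¬ j + 1 + Q < Q + 1)]
  rw [show j + 1 + Q - Q - 1 = j by omega]

variable (Q n)

/-- extension of a point -/
def pext (hQ : 1 ≤ Q) (pb : Fin (Q+1) → F) (d : Fin n → F) : Fin (Q+n+1) → F :=
  fun i => liftP Q hQ (pb 0) (nf pb) (fun j => if h : j < n then d ⟨j, h⟩ else 0) i.val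

/-- extension of a line -/
def lext (hQ : 1 ≤ Q) (lb : Fin (Q+1) → F) (c : Fin n → F) : Fin (Q+n+1) → F :=
  fun i => liftL Q hQ (nf lb) (fun j => if h : j < n then c ⟨j, h⟩ else 0) i.val

variable {Q n}

lemma nf_pext (hQ : 1 ≤ Q) (pb : Fin (Q+1) → F) (d : Fin n → F) {t : ℕ} (h : t < Q+n+1) :
    nf (pext Q n hQ pb d) t
      = liftP Q hQ (pb 0) (nf pb) (fun j => if h : j < n then d ⟨j, h⟩ else 0) t := by
  rw [nf_lt _ h, pext]

lemma nf_lext (hQ : 1 ≤ Q) (lb : Fin (Q+1) → F) (c : Fin n → F) {t : ℕ} (h : t < Q+n+1) :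
    nf (lext Q n hQ lb c) t
      = liftL Q hQ (nf lb) (fun j => if h : j < n then c ⟨j, h⟩ else 0) t := by
  rw [nf_lt _ h, lext]

lemma pext_zero (hQ : 1 ≤ Q) (pb : Fin (Q+1) → F) (d : Fin n → F) : pext Q n hQ pb d 0 = pb 0 := by
  have h0 : ((0 : Fin (Q+n+1)) : ℕ) = 0 := rfl
  rw [pext, h0, liftP_lt _ _ _ _ (by omega)]
  rw [nf_lt _ (by omega : (0:ℕ) < Q + 1)]
  exact congrArg pb (Fin.ext rfl)

lemma trunc_pext (hQ : 1 ≤ Q) (pb : Fin (Q+1) → F) (d : Fin n → F) : trunc Q n (pext Q n hQ pb d) = pb := by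
  funext i
  rw [trunc, nf_pext _ _ _ (by omega : i.val < Q+n+1), liftP_lt _ _ _ _ (by omega : i.val < Q+1),
    nf_lt _ (by omega : i.val < Q+1)]

lemma trunc_lext (hQ : 1 ≤ Q) (lb : Fin (Q+1) → F) (c : Fin n → F) :
    trunc Q n (lext Q n hQ lb c) = lb := by
  funext i
  rw [trunc, nf_lext _ _ _ (by omega : i.val < Q+n+1), liftL_lt _ _ _ (by omega : i.val < Q+1),
    nf_lt _ (by omega : i.val < Q+1)]

lemma chiP_pext (hQ : 1 ≤ Q) (pb : Fin (Q+1) → F) (d : Fin n → F) : chiP Q n (pext Q n hQ pb d) = d := by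
  funext j
  have hj := j.isLt
  rw [chiP]
  rw [pext_zero]
  rw [Finset.sum_range_succ]
  have hrw : ∀ t ∈ Finset.range Q, pb 0 ^ (Q - t) * nf (pext Q n hQ pb d) (j.val+1+t)
      = pb 0 ^ (Q - t) * liftP Q hQ (pb 0) (nf pb)
          (fun j => if h : j < n then d ⟨j, h⟩ else 0) (j.val+1+t) := by
    intro t ht
    rw [Finset.mem_range] at ht
    rw [nf_pext hQ _ _ (by omega)]
  rw [Finset.sum_congr rfl hrw, nf_pext hQ _ _ (by omega : j.val+1+Q < Q+n+1),
    nf_pext hQ _ _ (by omega : j.val+1 < Q+n+1), liftP_ge]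
  rw [Nat.sub_self, pow_zero, one_mul]
  rw [dif_pos hj]
  have hjj : (⟨j.val, hj⟩ : Fin n) = j := Fin.ext rfl
  rw [hjj]
  rw [← Fin.sum_univ_eq_sum_range (fun t => pb 0 ^ (Q - t) * liftP Q hQ (pb 0) (nf pb)
    (fun j => if h : j < n then d ⟨j, h⟩ else 0) (j.val+1+t)) Q]
  ring

lemma chiL_lext (hQ : 1 ≤ Q) (lb : Fin (Q+1) → F) (c : Fin n → F) : chiL Q n (lext Q n hQ lb c) = c := by
  funext j
  have hj := j.isLt
  rw [chiL, nf_lext hQ _ _ (by omega : j.val+1 < Q+n+1),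
    nf_lext hQ _ _ (by omega : j.val+1+Q < Q+n+1), liftL_ge]
  rw [dif_pos hj]
  have hjj : (⟨j.val, hj⟩ : Fin n) = j := Fin.ext rfl
  rw [hjj]
  ring

/-- a point is determined by truncation and invariant -/
lemma pt_unique (hQ : 1 ≤ Q) {p p' : Fin (Q+n+1) → F} (ht : trunc Q n p = trunc Q n p')
    (hc : chiP Q n p = chiP Q n p') : p = p' := by
  have key : ∀ t, t < Q+n+1 → nf p t = nf p' t := by
    intro t
    induction t using Nat.strong_induction_on with
    | _ t IH =>
      intro htlt
      by_cases hsm : t < Q + 1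
      · have := congrFun ht ⟨t, hsm⟩
        rw [trunc, trunc] at this
        exact this
      · obtain ⟨j, rfl⟩ : ∃ j, t = j+1+Q := ⟨t-Q-1, by omega⟩
        have hjn : j < n := by omega
        have hcj := congrFun hc ⟨j, hjn⟩
        rw [chiP, chiP] at hcj
        simp only [Fin.val_mk] at hcj
        rw [Finset.sum_range_succ, Finset.sum_range_succ] at hcj
        simp only [Nat.sub_self, pow_zero, one_mul] at hcj
        have h00 : p 0 = p' 0 := by
          have := congrFun ht 0
          rw [trunc, trunc] at this
          rw [nf_lt _ (by omega : ((0:Fin (Q+1)):ℕ) < Q+n+1),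
            nf_lt _ (by omega : ((0:Fin (Q+1)):ℕ) < Q+n+1)] at this
          have e0 : (⟨((0:Fin (Q+1)):ℕ), by omega⟩ : Fin (Q+n+1)) = 0 := Fin.ext rfl
          rw [e0] at this
          exact this
        have hlow : ∀ i ∈ Finset.range Q,
            p 0 ^ (Q - i) * nf p (j+1+i) = p' 0 ^ (Q - i) * nf p' (j+1+i) := by
          intro i hi
          rw [Finset.mem_range] at hi
          rw [h00, IH (j+1+i) (by omega) (by omega)]
        rw [Finset.sum_congr rfl hlow, IH (j+1) (by omega) (by omega)] at hcj
        linear_combination hcj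
  funext i
  have := key i.val i.isLt
  rw [nf_lt _ i.isLt, nf_lt _ i.isLt] at this
  have e : (⟨i.val, i.isLt⟩ : Fin (Q+n+1)) = i := Fin.ext rfl
  rw [e] at this
  exact this

/-- a line is determined by truncation and invariant -/
lemma ln_unique (hQ : 1 ≤ Q) {l l' : Fin (Q+n+1) → F} (ht : trunc Q n l = trunc Q n l')
    (hc : chiL Q n l = chiL Q n l') : l = l' := by
  have key : ∀ t, t < Q+n+1 → nf l t = nf l' t := by
    intro t
    induction t using Nat.strong_induction_on with
    | _ t IH =>
      intro htlt
      by_cases hsm : t < Q + 1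
      · have := congrFun ht ⟨t, hsm⟩
        rw [trunc, trunc] at this
        exact this
      · obtain ⟨j, rfl⟩ : ∃ j, t = j+1+Q := ⟨t-Q-1, by omega⟩
        have hjn : j < n := by omega
        have hcj := congrFun hc ⟨j, hjn⟩
        rw [chiL, chiL] at hcj
        simp only [Fin.val_mk] at hcj
        rw [IH (j+1) (by omega) (by omega)] at hcj
        linear_combination -hcj
  funext i
  have := key i.val i.isLt
  rw [nf_lt _ i.isLt, nf_lt _ i.isLt] at this
  have e : (⟨i.val, i.isLt⟩ : Fin (Q+n+1)) = i := Fin.ext rfl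
  rw [e] at this
  exact this

end Lifts
section SumLevel
open SimpleGraph
variable {Q n : ℕ} [Fintype F]

/-- vertex truncation -/
def rmap (Q n : ℕ) : ((Fin (Q+n+1) → F) ⊕ (Fin (Q+n+1) → F)) →
    ((Fin (Q+1) → F) ⊕ (Fin (Q+1) → F)) :=
  Sum.map (trunc Q n) (trunc Q n)

/-- vertex invariant -/
def chi (Q n : ℕ) : ((Fin (Q+n+1) → F) ⊕ (Fin (Q+n+1) → F)) → (Fin n → F) :=
  Sum.elim (chiP Q n) (chiL Q n)

/-- vertex lift -/
def vlift (Q n : ℕ) (hQ : 1 ≤ Q) :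
    ((Fin (Q+1) → F) ⊕ (Fin (Q+1) → F)) → (Fin n → F) →
    ((Fin (Q+n+1) → F) ⊕ (Fin (Q+n+1) → F))
  | Sum.inl pb, c => Sum.inl (pext Q n hQ pb c)
  | Sum.inr lb, c => Sum.inr (lext Q n hQ lb c)

variable (hQ : 1 ≤ Q) (hQcard : Q + 1 = Fintype.card F)

lemma rmap_vlift (v : (Fin (Q+1) → F) ⊕ (Fin (Q+1) → F)) (c : Fin n → F) :
    rmap Q n (vlift Q n hQ v c) = v := by
  cases v with
  | inl pb => simp [vlift, rmap, trunc_pext]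
  | inr lb => simp [vlift, rmap, trunc_lext]

lemma chi_vlift (v : (Fin (Q+1) → F) ⊕ (Fin (Q+1) → F)) (c : Fin n → F) :
    chi Q n (vlift Q n hQ v c) = c := by
  cases v with
  | inl pb => simp [vlift, chi, chiP_pext]
  | inr lb => simp [vlift, chi, chiL_lext]

lemma vlift_eq {x : (Fin (Q+n+1) → F) ⊕ (Fin (Q+n+1) → F)} :
    vlift Q n hQ (rmap Q n x) (chi Q n x) = x := by
  cases x with
  | inl p =>
    show Sum.inl (pext Q n hQ (trunc Q n p) (chiP Q n p)) = _
    exact congrArg Sum.inl (pt_unique hQ (trunc_pext hQ _ _) (chiP_pext hQ _ _))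
  | inr l =>
    show Sum.inr (lext Q n hQ (trunc Q n l) (chiL Q n l)) = _
    exact congrArg Sum.inr (ln_unique hQ (trunc_lext hQ _ _) (chiL_lext hQ _ _))

include hQ hQcard

/-- the key adjacency transfer -/
lemma adj_transfer {x y : (Fin (Q+n+1) → F) ⊕ (Fin (Q+n+1) → F)} :
    (Wenger F (Q+n)).Adj x y ↔
      (Wenger F Q).Adj (rmap Q n x) (rmap Q n y) ∧ chi Q n x = chi Q n y := by
  constructor
  · intro h
    rw [adj_iff] at h
    rcases h with ⟨p, l, rfl, rfl, hw⟩ | ⟨p, l, rfl, rfl, hw⟩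
    · exact ⟨adj_inl_inr (trunc_adj hw), chi_adj hQcard hw⟩
    · exact ⟨(adj_inl_inr (trunc_adj hw)).symm, (chi_adj hQcard hw).symm⟩
  · rintro ⟨hadj, hchi⟩
    cases x with
    | inl p =>
      cases y with
      | inl p' =>
        exfalso
        rw [adj_iff] at hadj
        rcases hadj with ⟨_, _, h1, h2, _⟩ | ⟨_, _, h1, h2, _⟩ <;> simp [rmap] at h1 h2
      | inr l =>
        have : wengerAdj Q (trunc Q n p) (trunc Q n l) := by
          rw [← adj_inl_inr_iff]
          exact hadj
        exact adj_inl_inr (adj_of_trunc hQcard hQ this hchi)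
    | inr l =>
      cases y with
      | inr l' =>
        exfalso
        rw [adj_iff] at hadj
        rcases hadj with ⟨_, _, h1, h2, _⟩ | ⟨_, _, h1, h2, _⟩ <;> simp [rmap] at h1 h2
      | inl p =>
        have : wengerAdj Q (trunc Q n p) (trunc Q n l) := by
          rw [← adj_inl_inr_iff]
          exact hadj.symm
        exact (adj_inl_inr (adj_of_trunc hQcard hQ this hchi.symm)).symm

lemma chi_reach {x y : (Fin (Q+n+1) → F) ⊕ (Fin (Q+n+1) → F)}
    (h : (Wenger F (Q+n)).Reachable x y) : chi Q n x = chi Q n y := by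
  obtain ⟨w⟩ := h
  induction w with
  | nil => rfl
  | cons hadj _ ih => exact (((adj_transfer hQ hQcard).mp hadj).2).trans ih

lemma vlift_reach (c : Fin n → F) {u v : (Fin (Q+1) → F) ⊕ (Fin (Q+1) → F)}
    (h : (Wenger F Q).Reachable u v) :
    (Wenger F (Q+n)).Reachable (vlift Q n hQ u c) (vlift Q n hQ v c) := by
  obtain ⟨w⟩ := h
  induction w with
  | nil => exact Reachable.refl _
  | cons hadj _ ih =>
    refine (Adj.reachable ?_).trans ih
    rw [adj_transfer hQ hQcard, rmap_vlift, rmap_vlift, chi_vlift, chi_vlift]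
    exact ⟨hadj, rfl⟩

/-- the classification of connected components -/
lemma reach_iff_chi {x y : (Fin (Q+n+1) → F) ⊕ (Fin (Q+n+1) → F)} :
    (Wenger F (Q+n)).Reachable x y ↔ chi Q n x = chi Q n y := by
  constructor
  · exact chi_reach hQ hQcard
  · intro h
    have hcon : (Wenger F Q).Connected := connected_of_le (le_of_eq hQcard)
    have hr := vlift_reach hQ hQcard (chi Q n x) (hcon.preconnected (rmap Q n x) (rmap Q n y))
    rw [vlift_eq] at hr
    rw [h, vlift_eq] at hr
    exact hr

end SumLevel
end WG


/-- For `1 ≤ m ≤ q - 1` the Wenger graph `W_m(q)` is connected; for `m ≥ q` it is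
disconnected, with exactly `q^{m-q+1}` components, each isomorphic to `W_{q-1}(q)`. -/
theorem statement_7 (F : Type) [Field F] [Fintype F] (m : ℕ) (hm : 1 ≤ m) :
    (m ≤ Fintype.card F - 1 → (Wenger F m).Connected) ∧
    (Fintype.card F ≤ m →
      ¬ (Wenger F m).Connected ∧
      Nat.card (Wenger F m).ConnectedComponent
        = Fintype.card F ^ (m - Fintype.card F + 1) ∧
      ∀ C : (Wenger F m).ConnectedComponent,
        Nonempty ((Wenger F m).induce C.supp ≃g Wenger F (Fintype.card F - 1))) := by
  classical
  have hcard2 : 2 ≤ Fintype.card F := Fintype.one_lt_card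
  constructor
  · intro h
    exact WG.connected_of_le (by omega)
  · intro h
    set Q := Fintype.card F - 1 with hQdef
    have hQ : 1 ≤ Q := by omega
    have hQcard : Q + 1 = Fintype.card F := by omega
    obtain ⟨n, rfl⟩ : ∃ n, m = Q + n := ⟨m - Q, by omega⟩
    have hn : 1 ≤ n := by omega
    set G := Wenger F (Q + n) with hG
    -- the invariant as a map on components
    set Φ : G.ConnectedComponent → (Fin n → F) :=
      SimpleGraph.ConnectedComponent.lift (WG.chi Q n)
        (fun v w p _ => WG.chi_reach hQ hQcard ⟨p⟩) with hΦ
    have hΦmk : ∀ v, Φ (G.connectedComponentMk v) = WG.chi Q n v := fun _ => rfl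
    set E : G.ConnectedComponent ≃ (Fin n → F) :=
      { toFun := Φ
        invFun := fun c => G.connectedComponentMk (WG.vlift Q n hQ (Sum.inr 0) c)
        left_inv := by
          intro C
          induction C using SimpleGraph.ConnectedComponent.ind with
          | _ v =>
            rw [hΦmk]
            exact SimpleGraph.ConnectedComponent.sound
              ((WG.reach_iff_chi hQ hQcard).mpr (WG.chi_vlift hQ _ _))
        right_inv := by
          intro c
          rw [hΦmk]
          exact WG.chi_vlift hQ _ _ } with hE
    refine ⟨?_, ?_, ?_⟩
    · -- disconnected
      intro hcon
      have hr := hcon.preconnected (WG.vlift Q n hQ (Sum.inr 0) (fun _ => 0))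
        (WG.vlift Q n hQ (Sum.inr 0) (fun _ => 1))
      have := (WG.reach_iff_chi hQ hQcard).mp hr
      rw [WG.chi_vlift, WG.chi_vlift] at this
      have h01 := congrFun this ⟨0, by omega⟩
      exact zero_ne_one h01
    · -- count
      rw [Nat.card_congr E, Nat.card_eq_fintype_card, Fintype.card_fun, Fintype.card_fin]
      congr 1
      omega
    · -- isomorphism of each component
      intro C
      induction C using SimpleGraph.ConnectedComponent.ind with
      | _ v =>
        have hsupp : ∀ x, x ∈ (G.connectedComponentMk v).supp ↔
            WG.chi Q n x = WG.chi Q n v := by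
          intro x
          rw [SimpleGraph.ConnectedComponent.mem_supp_iff,
            SimpleGraph.ConnectedComponent.eq]
          exact WG.reach_iff_chi hQ hQcard
        refine ⟨{ toFun := fun x => WG.rmap Q n x.val
                  invFun := fun u => ⟨WG.vlift Q n hQ u (WG.chi Q n v), by
                    rw [hsupp]
                    exact WG.chi_vlift hQ _ _⟩
                  left_inv := ?_
                  right_inv := ?_
                  map_rel_iff' := ?_ }⟩
        · rintro ⟨x, hx⟩
          apply Subtype.ext
          show WG.vlift Q n hQ (WG.rmap Q n x) (WG.chi Q n v) = x
          rw [hsupp] at hx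
          rw [← hx]
          exact WG.vlift_eq hQ
        · intro u
          show WG.rmap Q n (WG.vlift Q n hQ u (WG.chi Q n v)) = u
          exact WG.rmap_vlift hQ _ _
        · rintro ⟨x, hx⟩ ⟨y, hy⟩
          rw [hsupp] at hx hy
          show (Wenger F Q).Adj (WG.rmap Q n x) (WG.rmap Q n y) ↔ G.Adj x y
          rw [hG, WG.adj_transfer hQ hQcard]
          simp only [hx, hy, and_true]
end

section
/- Let q be a prime power and let m be an integer with 1 ≤ m ≤ q−1. Then the diameter of the Wenger graph W_m(q) is exactly 2m+2. -/
namespace WengerAux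
open Finset Polynomial
variable {F : Type} [Field F] {m : ℕ}

/-- `psi p k = ∑_{j=1}^k p_0^{k-j} p_j`, the generating transform of a point. -/
def psi (p : Fin (m+1) → F) : ℕ → F
  | 0 => 0
  | k+1 => p 0 * psi p k + (if h : k + 1 < m + 1 then p ⟨k+1, h⟩ else 0)

lemma adj_iff {p l : Fin (m+1) → F} :
    (Wenger F m).Adj (Sum.inl p) (Sum.inr l) ↔ wengerAdj m p l := by
  simp [Wenger, SimpleGraph.fromRel_adj]

lemma not_adj_ll {p p' : Fin (m+1) → F} : ¬ (Wenger F m).Adj (Sum.inl p) (Sum.inl p') := by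
  simp [Wenger, SimpleGraph.fromRel_adj]

lemma not_adj_rr {p p' : Fin (m+1) → F} : ¬ (Wenger F m).Adj (Sum.inr p) (Sum.inr p') := by
  simp [Wenger, SimpleGraph.fromRel_adj]

lemma adj_iff' {p l : Fin (m+1) → F} :
    (Wenger F m).Adj (Sum.inr l) (Sum.inl p) ↔ wengerAdj m p l := by
  rw [SimpleGraph.adj_comm]; exact adj_iff

/-- Key identity: if `p` is adjacent to `l` then `psi p k = l 0 * p 0 ^ k - l k`. -/
lemma psi_of_adj {p l : Fin (m+1) → F} (h : wengerAdj m p l) :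
    ∀ k (hk : k < m + 1), psi p k = l 0 * p 0 ^ k - l ⟨k, hk⟩ := by
  intro k
  induction k with
  | zero => intro hk; simp [psi]
  | succ n ih =>
    intro hk
    have hn : n < m + 1 := Nat.lt_of_succ_lt hk
    have hnm : n < m := Nat.succ_lt_succ_iff.mp hk
    have hadj := h ⟨n, hnm⟩
    have hsucc : (⟨n, hnm⟩ : Fin m).succ = (⟨n+1, hk⟩ : Fin (m+1)) := by ext; simp
    have hcast : (⟨n, hnm⟩ : Fin m).castSucc = (⟨n, hn⟩ : Fin (m+1)) := by ext; simp
    rw [hsucc, hcast] at hadj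
    have he : psi p (n+1) = p 0 * psi p n + p ⟨n+1, hk⟩ := by rw [psi, dif_pos hk]
    rw [he, ih hn]
    have : p ⟨n+1, hk⟩ = p 0 * l ⟨n, hn⟩ - l ⟨n+1, hk⟩ := by linear_combination hadj
    rw [this]; ring

/-- `psi` together with the 0-th coordinate determines the point. -/
lemma eq_of_psi_eq {p p' : Fin (m+1) → F} (h0 : p 0 = p' 0)
    (h : ∀ k, k < m + 1 → psi p k = psi p' k) : p = p' := by
  funext i
  obtain ⟨k, hk⟩ := i
  match k with
  | 0 => exact h0
  | n+1 =>
    have h1 := h (n+1) hk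
    have h2 := h n (Nat.lt_of_succ_lt hk)
    rw [psi, psi, dif_pos hk, dif_pos hk, h0, h2] at h1
    exact add_left_cancel h1

/-! ### explicit neighbours -/

def lineAux (p : Fin (m+1) → F) (t : F) : ℕ → F
  | 0 => t
  | k+1 => p 0 * lineAux p t k - (if h : k + 1 < m + 1 then p ⟨k+1, h⟩ else 0)

def lineFrom (p : Fin (m+1) → F) (t : F) : Fin (m+1) → F := fun i => lineAux p t i

lemma lineFrom_zero (p : Fin (m+1) → F) (t : F) : lineFrom p t 0 = t := rfl

lemma lineFrom_adj (p : Fin (m+1) → F) (t : F) : wengerAdj m p (lineFrom p t) := by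
  intro k
  obtain ⟨n, hn⟩ := k
  have h1 : ((⟨n, hn⟩ : Fin m).succ : Fin (m+1)) = ⟨n+1, Nat.succ_lt_succ hn⟩ := by ext; simp
  have h2 : ((⟨n, hn⟩ : Fin m).castSucc : Fin (m+1)) = ⟨n, Nat.lt_succ_of_lt hn⟩ := by ext; simp
  rw [h1, h2]
  show lineAux p t (n+1) + p _ = p 0 * lineAux p t n
  rw [lineAux, dif_pos (Nat.succ_lt_succ hn)]
  ring

def pointFrom (l : Fin (m+1) → F) (b : F) : Fin (m+1) → F :=
  fun i => match i with
  | ⟨0, _⟩ => b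
  | ⟨n+1, h⟩ => b * l ⟨n, Nat.lt_of_succ_lt h⟩ - l ⟨n+1, h⟩

lemma pointFrom_zero (l : Fin (m+1) → F) (b : F) : pointFrom l b 0 = b := rfl

lemma pointFrom_adj (l : Fin (m+1) → F) (b : F) : wengerAdj m (pointFrom l b) l := by
  intro k
  obtain ⟨n, hn⟩ := k
  have h1 : ((⟨n, hn⟩ : Fin m).succ : Fin (m+1)) = ⟨n+1, Nat.succ_lt_succ hn⟩ := by ext; simp
  have h2 : ((⟨n, hn⟩ : Fin m).castSucc : Fin (m+1)) = ⟨n, Nat.lt_succ_of_lt hn⟩ := by ext; simp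
  rw [h1, h2]
  show l _ + (b * l ⟨n, _⟩ - l ⟨n+1, _⟩) = (pointFrom l b 0) * l _
  rw [pointFrom_zero]
  ring

/-! ### Abel summation -/

lemma abel (t c : ℕ → F) (s : ℕ) :
    ∑ i ∈ range s, t i * (c (i+1) - c i)
      = ∑ j ∈ range (s+1), ((if j = 0 then 0 else t (j-1)) - (if j = s then 0 else t j)) * c j := by
  have e1 : ∑ j ∈ range (s+1), (if j = 0 then (0:F) else t (j-1)) * c j
      = ∑ i ∈ range s, t i * c (i+1) := by
    rw [Finset.sum_range_succ']
    simp
  have e2 : ∑ j ∈ range (s+1), (if j = s then (0:F) else t j) * c j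
      = ∑ i ∈ range s, t i * c i := by
    rw [Finset.sum_range_succ]
    rw [if_pos rfl]
    rw [Finset.sum_congr rfl (fun j hj => by
      rw [if_neg (Nat.ne_of_lt (Finset.mem_range.mp hj))])]
    ring
  calc ∑ i ∈ range s, t i * (c (i+1) - c i)
      = ∑ i ∈ range s, (t i * c (i+1) - t i * c i) := by
        apply Finset.sum_congr rfl; intros; ring
    _ = ∑ i ∈ range s, t i * c (i+1) - ∑ i ∈ range s, t i * c i := Finset.sum_sub_distrib _ _
    _ = _ := by
        rw [← e1, ← e2, ← Finset.sum_sub_distrib]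
        apply Finset.sum_congr rfl; intros; ring

/-! ### lower bound: no small representation of the `x^m` vector -/

lemma no_small_rep (m s : ℕ) (hs : s ≤ m) (hs1 : 1 ≤ s) (b : ℕ → F) (hb : b s = b 0)
    (μ : ℕ → F)
    (h : ∀ k ≤ m, ∑ j ∈ range (s+1), μ j * b j ^ k = if k = m then 1 else 0) : False := by
  classical
  set S : Finset F := (range s).image b with hSdef
  have hmem : ∀ j ∈ range (s+1), b j ∈ S := by
    intro j hj
    rcases Nat.lt_or_ge j s with hjs | hjs
    · exact Finset.mem_image_of_mem b (Finset.mem_range.mpr hjs)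
    · have : j = s := Nat.le_antisymm (Nat.lt_succ_iff.mp (Finset.mem_range.mp hj)) hjs
      rw [this, hb]
      exact Finset.mem_image_of_mem b (Finset.mem_range.mpr hs1)
  have hcard : S.card ≤ m := le_trans (le_trans Finset.card_image_le (by simp)) hs
  set ν : F → F := fun c => ∑ j ∈ (range (s+1)).filter (fun j => b j = c), μ j with hν
  have hgroup : ∀ k, ∑ c ∈ S, ν c * c ^ k = ∑ j ∈ range (s+1), μ j * b j ^ k := by
    intro k
    rw [← Finset.sum_fiberwise_of_maps_to hmem (fun j => μ j * b j ^ k)]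
    apply Finset.sum_congr rfl
    intro c _
    rw [hν, Finset.sum_mul]
    apply Finset.sum_congr rfl
    intro j hj
    rw [(Finset.mem_filter.mp hj).2]
  set f : F[X] := X ^ (m - S.card) * ∏ c ∈ S, (X - C c) with hf
  have hmonic : f.Monic := (monic_X_pow _).mul (monic_prod_of_monic _ _ fun c _ => monic_X_sub_C c)
  have hdeg : f.natDegree = m := by
    rw [hf, natDegree_mul (pow_ne_zero _ X_ne_zero)
      (monic_prod_of_monic _ _ fun c _ => monic_X_sub_C c).ne_zero,
      natDegree_X_pow, natDegree_prod_of_monic _ _ fun c _ => monic_X_sub_C c]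
    simp [natDegree_X_sub_C]
    omega
  have heval : ∀ c ∈ S, f.eval c = 0 := by
    intro c hc
    rw [hf]
    simp only [eval_mul, eval_prod]
    have : ∏ d ∈ S, (c - d) = 0 := Finset.prod_eq_zero hc (by ring)
    simp [this]
  have key : (0 : F) = f.coeff m := by
    have h0 : ∑ c ∈ S, ν c * f.eval c = 0 := by
      apply Finset.sum_eq_zero
      intro c hc; rw [heval c hc, mul_zero]
    have h1 : ∑ c ∈ S, ν c * f.eval c
        = ∑ k ∈ range (m+1), f.coeff k * ∑ c ∈ S, ν c * c ^ k := by
      rw [Finset.sum_congr rfl (fun c _ => by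
        rw [eval_eq_sum_range' (lt_of_le_of_lt hdeg.le (Nat.lt_succ_self m)) c, Finset.mul_sum])]
      rw [Finset.sum_comm]
      apply Finset.sum_congr rfl
      intro k _
      rw [Finset.mul_sum]
      apply Finset.sum_congr rfl
      intros; ring
    have h2 : ∑ k ∈ range (m+1), f.coeff k * ∑ c ∈ S, ν c * c ^ k
        = ∑ k ∈ range (m+1), f.coeff k * (if k = m then 1 else 0) := by
      apply Finset.sum_congr rfl
      intro k hk
      rw [hgroup k, h k (Nat.lt_succ_iff.mp (Finset.mem_range.mp hk))]
    rw [h1, h2] at h0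
    rw [← h0]
    rw [show (∑ k ∈ range (m + 1), f.coeff k * if k = m then (1:F) else 0)
        = ∑ k ∈ range (m+1), if k = m then f.coeff k else 0 from
      Finset.sum_congr rfl (fun k _ => by split <;> simp)]
    rw [Finset.sum_ite_eq' (range (m+1)) m (fun k => f.coeff k)]
    simp
  have : f.coeff m = 1 := by
    have := hmonic.leadingCoeff
    rwa [leadingCoeff, hdeg] at this
  rw [this] at key
  exact one_ne_zero key.symm

/-! ### representation extracted from walks -/

/-- representation property for even walks between two points -/
def Rep (p p' : Fin (m+1) → F) (n : ℕ) : Prop :=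
  ∃ (s : ℕ) (b t : ℕ → F), n = 2*s ∧ b 0 = p 0 ∧ b s = p' 0 ∧
    ∀ k, k < m + 1 →
      psi p' k - psi p k = ∑ i ∈ range s, t i * (b (i+1) ^ k - b i ^ k)

/-- representation property for odd walks from a line to a point -/
def RepL (l p' : Fin (m+1) → F) (n : ℕ) : Prop :=
  ∃ (s : ℕ) (b t : ℕ → F), n = 2*s+1 ∧ b s = p' 0 ∧
    ∀ k (hk : k < m + 1),
      psi p' k + l ⟨k, hk⟩ - l 0 * b 0 ^ k = ∑ i ∈ range s, t i * (b (i+1) ^ k - b i ^ k)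

def R (u v : (Fin (m + 1) → F) ⊕ (Fin (m + 1) → F)) (n : ℕ) : Prop :=
  match v with
  | Sum.inr _ => True
  | Sum.inl p' =>
    match u with
    | Sum.inl p => Rep p p' n
    | Sum.inr l => RepL l p' n

lemma walk_rep : ∀ (u v : (Fin (m + 1) → F) ⊕ (Fin (m + 1) → F))
    (w : (Wenger F m).Walk u v), R u v w.length := by
  intro u v w
  induction w with
  | nil =>
    rename_i u'
    match u' with
    | Sum.inr l => trivial
    | Sum.inl p =>
      exact ⟨0, fun _ => p 0, fun _ => 0, rfl, rfl, rfl, fun k hk => by simp⟩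
  | @cons a c d h w ih =>
    match a, c, d with
    | _, _, Sum.inr _ => trivial
    | Sum.inl p, Sum.inl p'', _ => exact absurd h not_adj_ll
    | Sum.inr l, Sum.inr l'', _ => exact absurd h not_adj_rr
    | Sum.inl p, Sum.inr l, Sum.inl p' =>
      obtain ⟨s, b, t, hlen, hbs, hrep⟩ := ih
      have hadj : wengerAdj m p l := adj_iff.mp h
      refine ⟨s+1, fun i => if i = 0 then p 0 else b (i-1),
        fun i => if i = 0 then l 0 else t (i-1),
        by rw [SimpleGraph.Walk.length_cons, hlen]; ring, by simp, ?_, ?_⟩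
      · simp [Nat.succ_ne_zero, hbs]
      · intro k hk
        rw [Finset.sum_range_succ']
        simp only [Nat.succ_ne_zero, if_neg, Nat.add_sub_cancel, if_pos rfl,
          reduceIte]
        have hpl := psi_of_adj hadj k hk
        have := hrep k hk
        calc psi p' k - psi p k
            = (psi p' k + l ⟨k, hk⟩ - l 0 * b 0 ^ k) + l 0 * (b 0 ^ k - p 0 ^ k) := by
              rw [hpl]; ring
          _ = _ := by rw [this]
    | Sum.inr l, Sum.inl p1, Sum.inl p' =>
      obtain ⟨s, b, t, hlen, hb0, hbs, hrep⟩ := ih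
      have hadj : wengerAdj m p1 l := adj_iff'.mp h
      refine ⟨s, b, t, by rw [SimpleGraph.Walk.length_cons, hlen], hbs, ?_⟩
      intro k hk
      have hpl := psi_of_adj hadj k hk
      have := hrep k hk
      rw [← this, hpl, hb0]
      ring

/-! ### building walks -/

lemma build (p : Fin (m+1) → F) (b t : ℕ → F) (hb0 : b 0 = p 0) (n : ℕ) :
    ∃ (p'' : Fin (m+1) → F) (w : (Wenger F m).Walk (Sum.inl p) (Sum.inl p'')),
      w.length = 2*n ∧ p'' 0 = b n ∧
      ∀ k, k < m+1 → psi p'' k = psi p k + ∑ i ∈ range n, t i * (b (i+1) ^ k - b i ^ k) := by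
  induction n with
  | zero => exact ⟨p, SimpleGraph.Walk.nil, rfl, hb0.symm, fun k _ => by simp⟩
  | succ n ihn =>
    obtain ⟨p1, w, hw, h0, hψ⟩ := ihn
    set l : Fin (m+1) → F := lineFrom p1 (t n) with hl
    set p2 : Fin (m+1) → F := pointFrom l (b (n+1)) with hp2
    have hadj1 : (Wenger F m).Adj (Sum.inl p1) (Sum.inr l) := adj_iff.mpr (lineFrom_adj p1 (t n))
    have hadj2 : (Wenger F m).Adj (Sum.inr l) (Sum.inl p2) :=
      adj_iff'.mpr (pointFrom_adj l (b (n+1)))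
    refine ⟨p2, w.append (SimpleGraph.Walk.cons hadj1 hadj2.toWalk), ?_, ?_, ?_⟩
    · rw [SimpleGraph.Walk.length_append, hw]
      simp [SimpleGraph.Adj.toWalk]
      ring
    · exact pointFrom_zero l (b (n+1))
    · intro k hk
      have e1 := psi_of_adj (lineFrom_adj p1 (t n)) k hk
      have e2 := psi_of_adj (pointFrom_adj l (b (n+1))) k hk
      rw [← hl] at e1
      rw [h0] at e1
      have e1' : psi p1 k = t n * b n ^ k - l ⟨k, hk⟩ := e1
      have e2' : psi p2 k = t n * b (n+1) ^ k - l ⟨k, hk⟩ := e2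
      rw [Finset.sum_range_succ, ← add_assoc, ← hψ k hk, e1', e2']
      ring

/-- From a `μ`-representation with zero coefficient sum, build a walk of length `2n`. -/
lemma reach_of_rep (p p' : Fin (m+1) → F) (n : ℕ) (hn : 1 ≤ n) (b μ : ℕ → F)
    (hb0 : b 0 = p 0) (hbn : b n = p' 0)
    (hsum : ∑ j ∈ range (n+1), μ j = 0)
    (hrep : ∀ k, k < m+1 → ∑ j ∈ range (n+1), μ j * b j ^ k = psi p' k - psi p k) :
    ∃ w : (Wenger F m).Walk (Sum.inl p) (Sum.inl p'), w.length = 2*n := by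
  set T : ℕ → F := fun j => -∑ i ∈ range (j+1), μ i with hT
  have hTsum : ∀ k, k < m+1 →
      ∑ i ∈ range n, T i * (b (i+1) ^ k - b i ^ k) = psi p' k - psi p k := by
    intro k hk
    rw [abel T (fun i => b i ^ k) n, ← hrep k hk]
    apply Finset.sum_congr rfl
    intro j hj
    have hj' : j < n + 1 := Finset.mem_range.mp hj
    congr 1
    rcases Nat.eq_zero_or_pos j with rfl | hjpos
    · rw [if_pos rfl, if_neg (by omega : (0:ℕ) ≠ n)]
      simp [hT]
    · rcases eq_or_ne j n with heq | hjn
      · rw [if_neg (by omega), if_pos heq]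
        have h1 : ∑ i ∈ range (j+1), μ i = 0 := by rw [heq]; exact hsum
        rw [Finset.sum_range_succ] at h1
        simp only [hT]
        rw [show j - 1 + 1 = j from by omega]
        linear_combination -h1
      · rw [if_neg (by omega), if_neg hjn]
        simp only [hT]
        rw [show j - 1 + 1 = j from by omega, Finset.sum_range_succ μ j]
        ring
  obtain ⟨p2, w, hw, h0, hψ⟩ := build p b T hb0 n
  have hp2 : p2 = p' := by
    apply eq_of_psi_eq (h0.trans hbn)
    intro k hk
    rw [hψ k hk, hTsum k hk]
    ring
  exact ⟨w.copy rfl (by rw [hp2]), by simpa using hw⟩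

lemma psi_zero : ∀ k, psi (m := m) (fun _ => (0:F)) k = 0 := by
  intro k
  induction k with
  | zero => rfl
  | succ n ih => simp [psi, ih]

lemma psi_e (hm : 1 ≤ m) :
    ∀ k, k < m+1 → psi (fun i : Fin (m+1) => if (i : ℕ) = m then (1:F) else 0) k
      = if k = m then 1 else 0 := by
  intro k
  induction k with
  | zero =>
    intro _
    rw [if_neg (by omega)]
    rfl
  | succ n ih =>
    intro hk
    rw [psi, dif_pos hk]
    have h0 : ((0 : Fin (m+1)) : ℕ) = 0 := rfl
    simp only [h0]
    rw [if_neg (by omega : (0:ℕ) ≠ m)]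
    simp

section WithCard
variable [Fintype F] [DecidableEq F]
open Matrix

lemma solve (b : Fin (m+1) → F) (hb : Function.Injective b) (W : Fin (m+1) → F) :
    ∃ μ : Fin (m+1) → F, ∀ k : Fin (m+1), ∑ j, μ j * b j ^ (k : ℕ) = W k := by
  set M : Matrix (Fin (m+1)) (Fin (m+1)) F := (Matrix.vandermonde b)ᵀ with hM
  have hdet : IsUnit M.det := by
    rw [hM, Matrix.det_transpose]
    exact isUnit_iff_ne_zero.mpr (Matrix.det_vandermonde_ne_zero_iff.mpr hb)
  refine ⟨M⁻¹.mulVec W, fun k => ?_⟩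
  have hMW : M.mulVec (M⁻¹.mulVec W) = W := by
    rw [Matrix.mulVec_mulVec, Matrix.mul_nonsing_inv _ hdet, Matrix.one_mulVec]
  calc ∑ j, M⁻¹.mulVec W j * b j ^ (k : ℕ)
      = M.mulVec (M⁻¹.mulVec W) k := by
        rw [Matrix.mulVec]
        simp only [dotProduct, hM, Matrix.transpose_apply, Matrix.vandermonde]
        apply Finset.sum_congr rfl
        intro j _
        simp only [Matrix.of_apply]
        ring
    _ = W k := by rw [hMW]

lemma exists_b1 (hcard : m + 1 ≤ Fintype.card F) (α : F) :
    ∃ b : Fin (m+1) → F, Function.Injective b ∧ b 0 = α := by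
  obtain ⟨e⟩ := Function.Embedding.nonempty_of_card_le
    (α := Fin (m+1)) (β := F) (by simpa using hcard)
  refine ⟨(Equiv.swap (e 0) α) ∘ e, ((Equiv.swap (e 0) α).injective).comp e.injective, ?_⟩
  simp [Equiv.swap_apply_left]

lemma exists_b2 (hcard : m + 1 ≤ Fintype.card F) (hm : 1 ≤ m) (α β : F) (hne : α ≠ β) :
    ∃ b : Fin (m+1) → F, Function.Injective b ∧ b 0 = α ∧ b (Fin.last m) = β := by
  obtain ⟨g, hg, hg0⟩ := exists_b1 hcard α
  refine ⟨(Equiv.swap (g (Fin.last m)) β) ∘ g,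
    ((Equiv.swap _ β).injective).comp hg, ?_, by simp [Equiv.swap_apply_left]⟩
  have h1 : g 0 ≠ g (Fin.last m) := by
    intro h
    have h' := hg h
    have h'' : (0 : Fin (m+1)) ≠ Fin.last m := by
      intro h'''
      have := congrArg Fin.val h'''
      simp [Fin.last] at this
      omega
    exact h'' h'
  have h2 : g 0 ≠ β := hg0 ▸ hne
  simp only [Function.comp_apply]
  rw [Equiv.swap_apply_of_ne_of_ne h1 h2, hg0]

lemma point_point (hcard : m + 1 ≤ Fintype.card F) (p p' : Fin (m+1) → F) :
    ∃ w : (Wenger F m).Walk (Sum.inl p) (Sum.inl p'), w.length = 2*(m+1) := by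
  obtain ⟨b0, hb0inj, hb00⟩ := exists_b1 hcard (p 0)
  obtain ⟨μ0, hμ0⟩ := solve b0 hb0inj (fun k => psi p' (k : ℕ) - psi p (k : ℕ))
  set b : ℕ → F := fun i => if h : i < m+1 then b0 ⟨i, h⟩ else p' 0 with hb
  set μ : ℕ → F := fun j => if h : j < m+1 then μ0 ⟨j, h⟩ else 0 with hμ
  have hrange : ∀ k, ∑ j ∈ range (m+2), μ j * b j ^ k = ∑ j : Fin (m+1), μ0 j * b0 j ^ k := by
    intro k
    rw [show m+2 = (m+1)+1 from rfl, Finset.sum_range_succ]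
    have hμtop : μ (m+1) = 0 := by rw [hμ]; simp
    rw [hμtop, zero_mul, add_zero]
    rw [← Fin.sum_univ_eq_sum_range (fun j => μ j * b j ^ k) (m+1)]
    apply Finset.sum_congr rfl
    intro j _
    rw [hμ, hb]
    simp [j.isLt]
  apply reach_of_rep p p' (m+1) (by omega) b μ
  · rw [hb]; simpa using hb00
  · rw [hb]; simp
  · have h0 := hμ0 0
    simp only [Fin.val_zero, pow_zero, mul_one] at h0
    rw [show psi p' 0 - psi p 0 = 0 from by simp [psi]] at h0
    calc ∑ j ∈ range (m+1+1), μ j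
        = ∑ j ∈ range (m+2), μ j * b j ^ 0 := by
          apply Finset.sum_congr rfl; intros; rw [pow_zero, mul_one]
      _ = 0 := by rw [hrange 0]; simpa using h0
  · intro k hk
    rw [show m + 1 + 1 = m + 2 from rfl, hrange k]
    have := hμ0 ⟨k, hk⟩
    simpa using this

lemma point_point_ne (hcard : m + 1 ≤ Fintype.card F) (hm : 1 ≤ m)
    (p p' : Fin (m+1) → F) (hne : p 0 ≠ p' 0) :
    ∃ w : (Wenger F m).Walk (Sum.inl p) (Sum.inl p'), w.length = 2*m := by
  obtain ⟨b0, hb0inj, hb00, hb0l⟩ := exists_b2 hcard hm (p 0) (p' 0) hne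
  obtain ⟨μ0, hμ0⟩ := solve b0 hb0inj (fun k => psi p' (k : ℕ) - psi p (k : ℕ))
  set b : ℕ → F := fun i => if h : i < m+1 then b0 ⟨i, h⟩ else 0 with hb
  set μ : ℕ → F := fun j => if h : j < m+1 then μ0 ⟨j, h⟩ else 0 with hμ
  have hrange : ∀ k, ∑ j ∈ range (m+1), μ j * b j ^ k = ∑ j : Fin (m+1), μ0 j * b0 j ^ k := by
    intro k
    rw [← Fin.sum_univ_eq_sum_range (fun j => μ j * b j ^ k) (m+1)]
    apply Finset.sum_congr rfl
    intro j _
    rw [hμ, hb]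
    simp [j.isLt]
  apply reach_of_rep p p' m hm b μ
  · rw [hb]; simpa using hb00
  · rw [hb]
    simp only [dif_pos (by omega : m < m+1)]
    rw [show (⟨m, by omega⟩ : Fin (m+1)) = Fin.last m from rfl]
    exact hb0l
  · have h0 := hμ0 0
    simp only [Fin.val_zero, pow_zero, mul_one] at h0
    rw [show psi p' 0 - psi p 0 = 0 from by simp [psi]] at h0
    calc ∑ j ∈ range (m+1), μ j
        = ∑ j ∈ range (m+1), μ j * b j ^ 0 := by
          apply Finset.sum_congr rfl; intros; rw [pow_zero, mul_one]
      _ = 0 := by rw [hrange 0]; simpa using h0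
  · intro k hk
    rw [hrange k]
    have := hμ0 ⟨k, hk⟩
    simpa using this

lemma point_line (hcard : m + 1 ≤ Fintype.card F) (hm : 1 ≤ m)
    (p l' : Fin (m+1) → F) :
    ∃ w : (Wenger F m).Walk (Sum.inl p) (Sum.inr l'), w.length = 2*m+1 := by
  have : Nontrivial F := Fintype.one_lt_card_iff_nontrivial.mp (by omega)
  obtain ⟨γ, hγ⟩ := exists_ne (p 0)
  have hne : p 0 ≠ pointFrom l' γ 0 := by
    rw [pointFrom_zero]
    exact fun h => hγ h.symm
  obtain ⟨w, hw⟩ := point_point_ne hcard hm p (pointFrom l' γ) hne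
  exact ⟨w.concat (adj_iff.mpr (pointFrom_adj l' γ)),
    by rw [SimpleGraph.Walk.length_concat, hw]⟩

end WithCard
end WengerAux

open WengerAux Finset in
/-- For `1 ≤ m ≤ q - 1`, the diameter of the Wenger graph `W_m(q)` is exactly `2m + 2`. -/
theorem statement_8 (F : Type) [Field F] [Fintype F] (m : ℕ)
    (hm1 : 1 ≤ m) (hm2 : m ≤ Fintype.card F - 1) :
    (Wenger F m).diam = 2 * m + 2 := by
  letI : DecidableEq F := Classical.decEq F
  have hpos : 0 < Fintype.card F := Fintype.card_pos
  have hcard : m + 1 ≤ Fintype.card F := by omega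
  -- upper bound on all extended distances
  have hpl : ∀ p l', (Wenger F m).edist (Sum.inl p) (Sum.inr l') ≤ ((2*m+1 : ℕ) : ℕ∞) := by
    intro p l'
    obtain ⟨w, hw⟩ := point_line hcard hm1 p l'
    have h := SimpleGraph.edist_le w
    rw [hw] at h
    exact h
  have hub : ∀ u v, (Wenger F m).edist u v ≤ ((2*m+2 : ℕ) : ℕ∞) := by
    intro u v
    match u, v with
    | Sum.inl p, Sum.inl p' =>
      obtain ⟨w, hw⟩ := point_point hcard p p'
      have h := SimpleGraph.edist_le w
      rw [hw] at h
      exact le_trans h (by norm_cast)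
    | Sum.inl p, Sum.inr l' =>
      exact le_trans (hpl p l') (by norm_cast; omega)
    | Sum.inr l, Sum.inl p' =>
      rw [SimpleGraph.edist_comm]
      exact le_trans (hpl p' l) (by norm_cast; omega)
    | Sum.inr l, Sum.inr l' =>
      have h1 : (Wenger F m).edist (Sum.inr l) (Sum.inl (pointFrom l 0)) ≤ ((1:ℕ) : ℕ∞) := by
        have h := SimpleGraph.edist_le ((adj_iff'.mpr (pointFrom_adj l 0)).toWalk)
        simpa using h
      calc (Wenger F m).edist (Sum.inr l) (Sum.inr l')
          ≤ (Wenger F m).edist (Sum.inr l) (Sum.inl (pointFrom l 0))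
            + (Wenger F m).edist (Sum.inl (pointFrom l 0)) (Sum.inr l') :=
            SimpleGraph.edist_triangle
        _ ≤ ((1:ℕ) : ℕ∞) + ((2*m+1 : ℕ) : ℕ∞) := add_le_add h1 (hpl _ l')
        _ = ((2*m+2 : ℕ) : ℕ∞) := by norm_cast; omega
  -- lower bound
  have hlow : ((2*m+2 : ℕ) : ℕ∞) ≤ (Wenger F m).edist
      (Sum.inl (fun _ => (0:F))) (Sum.inl (fun i : Fin (m+1) => if (i:ℕ) = m then 1 else 0)) := by
    rw [SimpleGraph.edist_eq_sInf]
    apply le_sInf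
    rintro x ⟨w, rfl⟩
    have hR := walk_rep _ _ w
    obtain ⟨s, b, t, hlen, hb0, hbs, hr⟩ := hR
    simp only [Nat.cast_le]
    rw [hlen]
    by_contra hlt
    push_neg at hlt
    have hsm : s ≤ m := by omega
    rcases Nat.eq_zero_or_pos s with rfl | hs1
    · have h := hr m (by omega)
      rw [psi_e hm1 m (by omega), psi_zero, if_pos rfl] at h
      simp at h
    · refine no_small_rep m s hsm hs1 b (by rw [hbs, hb0]; simp [if_neg (show ¬((0:ℕ) = m) by omega)]; exact if_neg (Nat.ne_of_lt hm1))
        (fun j => (if j = 0 then 0 else t (j-1)) - (if j = s then 0 else t j)) ?_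
      intro k hk
      rw [← abel t (fun i => b i ^ k) s, ← hr k (by omega)]
      rw [psi_e hm1 k (by omega), psi_zero]
      ring
  have hediam : (Wenger F m).ediam = ((2*m+2 : ℕ) : ℕ∞) :=
    le_antisymm (SimpleGraph.ediam_le_of_edist_le hub)
      (le_trans hlow SimpleGraph.edist_le_ediam)
  rw [SimpleGraph.diam, hediam]
  exact ENat.toNat_coe _
end

section
/- Let m, n, m', n' be positive integers and let q, q' be prime powers. The graphs B(q; m,n) and B(q'; m',n') are isomorphic if and only if q = q' and the multisets {gcd(m, q−1), gcd(n, q−1)} and {gcd(m', q−1), gcd(n', q−1)} are equal. -/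
open Finset

/-- The monomial graph `B(q; m, n)`: a bipartite graph on two copies of `F_q²`, where the
point `(p₁, p₂)` and the line `[l₁, l₂]` are adjacent iff `p₂ + l₂ = p₁^m l₁^n`. -/
def monomialGraph (F : Type) [Field F] (m n : ℕ) :
    SimpleGraph ((F × F) ⊕ (F × F)) :=
  SimpleGraph.fromRel (fun x y => ∃ p l : F × F,
    x = Sum.inl p ∧ y = Sum.inr l ∧ p.2 + l.2 = p.1 ^ m * l.1 ^ n)

namespace MGAux

variable {F : Type} [Field F]

lemma adj_inl_inr (m n : ℕ) (p l : F × F) :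
    (monomialGraph F m n).Adj (Sum.inl p) (Sum.inr l) ↔ p.2 + l.2 = p.1 ^ m * l.1 ^ n := by
  rw [monomialGraph, SimpleGraph.fromRel_adj]
  constructor
  · rintro ⟨-, ⟨p', l', hp, hl, he⟩ | ⟨p', l', hp, hl, he⟩⟩
    · obtain rfl : p = p' := Sum.inl_injective hp
      obtain rfl : l = l' := Sum.inr_injective hl
      exact he
    · exact absurd hp (by simp)
  · intro h
    exact ⟨by simp, Or.inl ⟨p, l, rfl, rfl, h⟩⟩

lemma adj_inr_inl (m n : ℕ) (p l : F × F) :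
    (monomialGraph F m n).Adj (Sum.inr l) (Sum.inl p) ↔ p.2 + l.2 = p.1 ^ m * l.1 ^ n := by
  rw [SimpleGraph.adj_comm]; exact adj_inl_inr m n p l

@[simp] lemma not_adj_inl_inl (m n : ℕ) (p p' : F × F) :
    ¬ (monomialGraph F m n).Adj (Sum.inl p) (Sum.inl p') := by
  simp [monomialGraph, SimpleGraph.fromRel_adj]

@[simp] lemma not_adj_inr_inr (m n : ℕ) (l l' : F × F) :
    ¬ (monomialGraph F m n).Adj (Sum.inr l) (Sum.inr l') := by
  simp [monomialGraph, SimpleGraph.fromRel_adj]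

/-- codegree -/
noncomputable def codeg {V : Type} (G : SimpleGraph V) (x y : V) : ℕ :=
  Nat.card (G.commonNeighbors x y)

lemma codeg_map {V V' : Type} {G : SimpleGraph V} {G' : SimpleGraph V'} (e : G ≃g G')
    (x y : V) : codeg G' (e.toEquiv x) (e.toEquiv y) = codeg G x y := by
  refine Nat.card_congr (Equiv.subtypeEquiv e.toEquiv ?_).symm
  intro z
  show z ∈ SimpleGraph.commonNeighbors G x y ↔ _ ∈ SimpleGraph.commonNeighbors G' _ _
  simp only [SimpleGraph.mem_commonNeighbors]
  exact and_congr (e.map_adj_iff (v := x) (w := z)).symm (e.map_adj_iff (v := y) (w := z)).symm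

variable [Fintype F] [DecidableEq F]

lemma codeg_inl_inl (m n : ℕ) (p p' : F × F) :
    codeg (monomialGraph F m n) (Sum.inl p) (Sum.inl p') =
      (univ.filter fun x : F => (p.1 ^ m - p'.1 ^ m) * x ^ n = p.2 - p'.2).card := by
  rw [codeg, ← Fintype.card_subtype, ← Nat.card_eq_fintype_card]
  refine Nat.card_congr (Equiv.symm ⟨fun x => ⟨Sum.inr (x.1, p.1 ^ m * x.1 ^ n - p.2), ?_⟩,
    fun z => ?_, ?_, ?_⟩)
  · obtain ⟨x, hx⟩ := x
    rw [SimpleGraph.mem_commonNeighbors, adj_inl_inr, adj_inl_inr]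
    constructor
    · show p.2 + (p.1 ^ m * x ^ n - p.2) = p.1 ^ m * x ^ n; ring
    · show p'.2 + (p.1 ^ m * x ^ n - p.2) = p'.1 ^ m * x ^ n
      linear_combination hx
  · obtain ⟨z, hz⟩ := z
    rw [SimpleGraph.mem_commonNeighbors] at hz
    rcases z with w | l
    · exact absurd hz.1 (not_adj_inl_inl m n p w)
    · refine ⟨l.1, ?_⟩
      have h1 := (adj_inl_inr m n p l).mp hz.1
      have h2 := (adj_inl_inr m n p' l).mp hz.2
      linear_combination h2 - h1
  · rintro ⟨x, hx⟩
    rfl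
  · rintro ⟨z, hz⟩
    rw [SimpleGraph.mem_commonNeighbors] at hz
    rcases z with w | l
    · exact absurd hz.1 (not_adj_inl_inl m n p w)
    · have h1 := (adj_inl_inr m n p l).mp hz.1
      apply Subtype.ext
      show Sum.inr (l.1, p.1 ^ m * l.1 ^ n - p.2) = Sum.inr l
      have he : p.1 ^ m * l.1 ^ n - p.2 = l.2 := by linear_combination -h1
      rw [he]

lemma codeg_inr_inr (m n : ℕ) (l l' : F × F) :
    codeg (monomialGraph F m n) (Sum.inr l) (Sum.inr l') =
      (univ.filter fun x : F => (l.1 ^ n - l'.1 ^ n) * x ^ m = l.2 - l'.2).card := by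
  rw [codeg, ← Fintype.card_subtype, ← Nat.card_eq_fintype_card]
  refine Nat.card_congr (Equiv.symm ⟨fun x => ⟨Sum.inl (x.1, x.1 ^ m * l.1 ^ n - l.2), ?_⟩,
    fun z => ?_, ?_, ?_⟩)
  · obtain ⟨x, hx⟩ := x
    rw [SimpleGraph.mem_commonNeighbors, adj_inr_inl, adj_inr_inl]
    constructor
    · show (x ^ m * l.1 ^ n - l.2) + l.2 = x ^ m * l.1 ^ n; ring
    · show (x ^ m * l.1 ^ n - l.2) + l'.2 = x ^ m * l'.1 ^ n
      linear_combination hx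
  · obtain ⟨z, hz⟩ := z
    rw [SimpleGraph.mem_commonNeighbors] at hz
    rcases z with w | k
    · refine ⟨w.1, ?_⟩
      have h1 := (adj_inr_inl m n w l).mp hz.1
      have h2 := (adj_inr_inl m n w l').mp hz.2
      linear_combination h2 - h1
    · exact absurd hz.1 (not_adj_inr_inr m n l k)
  · rintro ⟨x, hx⟩
    rfl
  · rintro ⟨z, hz⟩
    rw [SimpleGraph.mem_commonNeighbors] at hz
    rcases z with w | k
    · have h1 := (adj_inr_inl m n w l).mp hz.1
      apply Subtype.ext
      show Sum.inl (w.1, w.1 ^ m * l.1 ^ n - l.2) = Sum.inl w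
      have he : w.1 ^ m * l.1 ^ n - l.2 = w.2 := by linear_combination -h1
      rw [he]
    · exact absurd hz.1 (not_adj_inr_inr m n l k)

omit [Fintype F] [DecidableEq F] in
lemma codeg_inl_inr (m n : ℕ) (p l : F × F) :
    codeg (monomialGraph F m n) (Sum.inl p) (Sum.inr l) = 0 := by
  rw [codeg, Nat.card_eq_zero]
  left
  rw [Set.isEmpty_coe_sort, Set.eq_empty_iff_forall_notMem]
  rintro (w | k) hz
  · rw [SimpleGraph.mem_commonNeighbors] at hz
    exact absurd hz.1 (not_adj_inl_inl m n p w)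
  · rw [SimpleGraph.mem_commonNeighbors] at hz
    exact absurd hz.2 (not_adj_inr_inr m n l k)

omit [Fintype F] [DecidableEq F] in
lemma codeg_inr_inl (m n : ℕ) (p l : F × F) :
    codeg (monomialGraph F m n) (Sum.inr l) (Sum.inl p) = 0 := by
  rw [codeg, Nat.card_eq_zero]
  left
  rw [Set.isEmpty_coe_sort, Set.eq_empty_iff_forall_notMem]
  rintro (w | k) hz
  · rw [SimpleGraph.mem_commonNeighbors] at hz
    exact absurd hz.2 (not_adj_inl_inl m n p w)
  · rw [SimpleGraph.mem_commonNeighbors] at hz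
    exact absurd hz.1 (not_adj_inr_inr m n l k)
lemma pow_eq_one_iff_gcd {k : ℕ} (hk : 0 < k) (x : F) :
    x ^ k = 1 ↔ x ^ (Nat.gcd k (Fintype.card F - 1)) = 1 := by
  constructor
  · intro h
    have hx0 : x ≠ 0 := by
      rintro rfl
      rw [zero_pow hk.ne'] at h
      exact zero_ne_one h
    set u := Units.mk0 x hx0 with hu
    have hxu : x = (u : F) := rfl
    have huk : u ^ k = 1 := by
      ext; rw [Units.val_pow_eq_pow_val]; exact h
    have h1 : orderOf u ∣ k := orderOf_dvd_of_pow_eq_one huk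
    have h2 : orderOf u ∣ Fintype.card F - 1 := by
      rw [← Fintype.card_units]; exact orderOf_dvd_card
    have h3 : u ^ (Nat.gcd k (Fintype.card F - 1)) = 1 :=
      orderOf_dvd_iff_pow_eq_one.mp (Nat.dvd_gcd h1 h2)
    rw [hxu, ← Units.val_pow_eq_pow_val, h3, Units.val_one]
  · intro h
    obtain ⟨c, hc⟩ := Nat.gcd_dvd_left k (Fintype.card F - 1)
    rw [hc, pow_mul, h, one_pow]

lemma card_pow_eq_one {k : ℕ} (hk : 0 < k) :
    (univ.filter fun x : F => x ^ k = 1).card = Nat.gcd k (Fintype.card F - 1) := by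
  set d := Nat.gcd k (Fintype.card F - 1) with hd
  have hq1 : 0 < Fintype.card F - 1 := by
    have := Fintype.one_lt_card (α := F); omega
  have hdpos : 0 < d := Nat.gcd_pos_of_pos_left _ hk
  have hddvd : d ∣ Fintype.card F - 1 := Nat.gcd_dvd_right _ _
  have hset : (univ.filter fun x : F => x ^ k = 1) = Polynomial.nthRootsFinset d (1 : F) := by
    ext x
    rw [mem_filter, Polynomial.mem_nthRootsFinset hdpos]
    simp only [mem_univ, true_and]
    exact pow_eq_one_iff_gcd hk x
  rw [hset]
  -- find a primitive d-th root of unity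
  obtain ⟨g, hg⟩ := IsCyclic.exists_generator (α := Fˣ)
  have hog : orderOf g = Fintype.card F - 1 := by
    rw [orderOf_eq_card_of_forall_mem_zpowers hg, Nat.card_eq_fintype_card, Fintype.card_units]
  set η := g ^ ((Fintype.card F - 1) / d) with hη
  have hoη : orderOf η = d := by
    rw [hη, orderOf_pow' _ (Nat.div_pos (Nat.le_of_dvd hq1 hddvd) hdpos).ne', hog,
      Nat.gcd_eq_right (Nat.div_dvd_of_dvd hddvd), Nat.div_div_self hddvd hq1.ne']
  have hprim : IsPrimitiveRoot ((η : F)) d := by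
    rw [IsPrimitiveRoot.coe_units_iff, ← hoη]
    exact IsPrimitiveRoot.orderOf η
  exact hprim.card_nthRootsFinset

lemma card_pow_eq_c {k : ℕ} (hk : 0 < k) {c : F} (x₀ : F) (h0 : x₀ ^ k = c) (hc : c ≠ 0) :
    (univ.filter fun x : F => x ^ k = c).card = Nat.gcd k (Fintype.card F - 1) := by
  rw [← card_pow_eq_one hk]
  have hx₀ : x₀ ≠ 0 := by rintro rfl; rw [zero_pow hk.ne'] at h0; exact hc h0.symm
  apply Finset.card_bij' (fun x _ => x₀⁻¹ * x) (fun y _ => x₀ * y)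
  · intro x hx
    rw [mem_filter] at hx ⊢
    refine ⟨mem_univ _, ?_⟩
    rw [mul_pow, hx.2, inv_pow, ← h0, inv_mul_cancel₀ (pow_ne_zero k hx₀)]
  · intro y hy
    rw [mem_filter] at hy ⊢
    refine ⟨mem_univ _, ?_⟩
    rw [mul_pow, hy.2, mul_one, h0]
  · intro x _; rw [mul_inv_cancel_left₀ hx₀]
  · intro y _; rw [inv_mul_cancel_left₀ hx₀]

lemma card_pow_eq_zero {k : ℕ} (hk : 0 < k) :
    (univ.filter fun x : F => x ^ k = 0).card = 1 := by
  have : (univ.filter fun x : F => x ^ k = 0) = {0} := by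
    ext x
    simp [pow_eq_zero_iff hk.ne']
  rw [this, card_singleton]

/-- the number of pairs with equal k-th powers, as a sum -/
lemma S_val {k : ℕ} (hk : 0 < k) :
    ∑ x : F, (univ.filter fun y : F => y ^ k = x ^ k).card
      = (Fintype.card F - 1) * Nat.gcd k (Fintype.card F - 1) + 1 := by
  rw [← Finset.sum_erase_add _ _ (mem_univ (0 : F))]
  have h0 : (univ.filter fun y : F => y ^ k = (0:F) ^ k).card = 1 := by
    rw [zero_pow hk.ne']; exact card_pow_eq_zero hk
  rw [h0]
  congr 1
  rw [Finset.sum_congr rfl (fun x hx => ?_), Finset.sum_const, Finset.card_erase_of_mem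
    (mem_univ _), Finset.card_univ, smul_eq_mul]
  exact card_pow_eq_c hk x rfl (pow_ne_zero k (Finset.ne_of_mem_erase hx))

lemma S_sq {k : ℕ} :
    ∑ c : F, ((univ.filter fun y : F => y ^ k = c).card) ^ 2
      = ∑ x : F, (univ.filter fun y : F => y ^ k = x ^ k).card := by
  have key : ∀ c : F, ((univ.filter fun y : F => y ^ k = c).card) ^ 2
      = ∑ x : F, if x ^ k = c then (univ.filter fun y : F => y ^ k = c).card else 0 := by
    intro c
    rw [Finset.sum_ite, Finset.sum_const_zero, add_zero, Finset.sum_const, smul_eq_mul, sq]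
  rw [Finset.sum_congr rfl (fun c _ => key c), Finset.sum_comm]
  refine Finset.sum_congr rfl (fun x _ => ?_)
  rw [Finset.sum_ite_eq univ (x ^ k) (fun c => (univ.filter fun y : F => y ^ k = c).card)]
  simp
/-- number of pairs with equal k-th powers -/
def Spow (F : Type) [Field F] [Fintype F] [DecidableEq F] (k : ℕ) : ℕ :=
  ∑ x : F, (univ.filter fun y : F => y ^ k = x ^ k).card

lemma Spow_val {k : ℕ} (hk : 0 < k) :
    Spow F k = (Fintype.card F - 1) * Nat.gcd k (Fintype.card F - 1) + 1 := S_val hk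

lemma filter_mul_ne {Δ : F} (hΔ : Δ ≠ 0) (v : ℕ) (d : F) :
    (univ.filter fun x : F => Δ * x ^ v = d) = univ.filter fun x : F => x ^ v = Δ⁻¹ * d := by
  ext x
  simp only [mem_filter, mem_univ, true_and]
  constructor
  · rintro rfl; rw [inv_mul_cancel_left₀ hΔ]
  · rintro h; rw [h, mul_inv_cancel_left₀ hΔ]

lemma card_filter_lt {Δ : F} (hΔ : Δ ≠ 0) {v : ℕ} (hv : 0 < v) (d : F) :
    (univ.filter fun x : F => Δ * x ^ v = d).card < Fintype.card F := by
  rw [filter_mul_ne hΔ]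
  by_cases hd : Δ⁻¹ * d = 0
  · rw [hd, card_pow_eq_zero hv]
    exact Fintype.one_lt_card
  · have hsub : (univ.filter fun x : F => x ^ v = Δ⁻¹ * d) ⊆ univ.erase 0 := by
      intro x hx
      rw [mem_filter] at hx
      refine mem_erase.mpr ⟨?_, mem_univ _⟩
      rintro rfl
      rw [zero_pow hv.ne'] at hx
      exact hd hx.2.symm
    calc (univ.filter fun x : F => x ^ v = Δ⁻¹ * d).card ≤ (univ.erase (0:F)).card :=
          Finset.card_le_card hsub
      _ < Fintype.card F := by
          rw [Finset.card_erase_of_mem (mem_univ _), Finset.card_univ]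
          have := Fintype.card_pos (α := F); omega

lemma card_filter_eq_ite {x y : F} (u : ℕ) (h : x ^ u = y ^ u) (v : ℕ) (u₂ v₂ : F) :
    (univ.filter fun t : F => (x ^ u - y ^ u) * t ^ v = u₂ - v₂).card
      = if u₂ = v₂ then Fintype.card F else 0 := by
  have hΔ : x ^ u - y ^ u = 0 := by rw [h, sub_self]
  rw [hΔ]
  by_cases huv : u₂ = v₂
  · rw [if_pos huv, Finset.filter_true_of_mem (fun t _ => by rw [zero_mul, huv, sub_self]),
      Finset.card_univ]
  · rw [if_neg huv, Finset.filter_false_of_mem (fun t _ hc => ?_), Finset.card_empty]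
    rw [zero_mul] at hc
    exact huv (sub_eq_zero.mp hc.symm)

omit [Field F] in
lemma diag_card :
    ((univ : Finset (F × F)).filter fun r => r.1 = r.2).card = Fintype.card F := by
  rw [← Finset.card_univ]
  apply Finset.card_bij' (fun (r : F × F) _ => r.1) (fun x _ => ((x, x) : F × F))
  · intro a _; exact mem_univ _
  · intro x _; simp
  · intro a ha
    rw [mem_filter] at ha
    exact Prod.ext rfl ha.2
  · intro x _; rfl

lemma Scard (u : ℕ) :
    ((univ : Finset (F × F)).filter fun r => r.1 ^ u = r.2 ^ u).card = Spow F u := by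
  rw [Finset.card_filter, Fintype.sum_prod_type, Spow]
  refine Finset.sum_congr rfl (fun x _ => ?_)
  rw [Finset.card_filter]
  refine Finset.sum_congr rfl (fun y _ => ?_)
  simp [eq_comm]

lemma block_tsum {u v : ℕ} (hu : 0 < u) (hv : 0 < v) :
    (∑ p : F × F, ∑ p' : F × F, if p ≠ p' then
        ((univ.filter fun t : F => (p.1 ^ u - p'.1 ^ u) * t ^ v = p.2 - p'.2).card) ^ 2 else 0)
      + (Fintype.card F) ^ 4 + Fintype.card F * Spow F u * Spow F v
      = (Fintype.card F) ^ 3 * Spow F u + (Fintype.card F) ^ 3 * Spow F v := by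
  classical
  set q := Fintype.card F with hqdef
  -- inner double sum
  have key : ∀ x y : F, (∑ u₂ : F, ∑ v₂ : F, if ((x, u₂) : F × F) ≠ (y, v₂) then
      ((univ.filter fun t : F => (x ^ u - y ^ u) * t ^ v = u₂ - v₂).card) ^ 2 else 0)
      = if x ^ u = y ^ u then (if x = y then 0 else q ^ 3) else q * Spow F v := by
    intro x y
    by_cases h : x ^ u = y ^ u
    · rw [if_pos h]
      by_cases hxy : x = y
      · subst hxy
        rw [if_pos rfl]
        apply Finset.sum_eq_zero; intro u₂ _
        apply Finset.sum_eq_zero; intro v₂ _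
        by_cases huv : u₂ = v₂
        · subst huv; simp
        · rw [if_pos (by simp [huv]), card_filter_eq_ite u rfl v, if_neg huv]
          simp
      · rw [if_neg hxy]
        have hne : ∀ u₂ v₂ : F, ((x, u₂) : F × F) ≠ (y, v₂) := by
          intro u₂ v₂ hc
          exact hxy (congrArg Prod.fst hc)
        calc (∑ u₂ : F, ∑ v₂ : F, if ((x, u₂) : F × F) ≠ (y, v₂) then
              ((univ.filter fun t : F => (x ^ u - y ^ u) * t ^ v = u₂ - v₂).card) ^ 2 else 0)
            = ∑ u₂ : F, ∑ v₂ : F, if u₂ = v₂ then q ^ 2 else 0 := by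
              refine Finset.sum_congr rfl (fun u₂ _ => Finset.sum_congr rfl (fun v₂ _ => ?_))
              rw [if_pos (hne u₂ v₂), card_filter_eq_ite u h v]
              by_cases huv : u₂ = v₂
              · rw [if_pos huv, if_pos huv, sq]
              · rw [if_neg huv, if_neg huv]
                simp
          _ = ∑ u₂ : F, q ^ 2 := by
              refine Finset.sum_congr rfl (fun u₂ _ => ?_)
              rw [Finset.sum_ite_eq univ u₂ (fun _ => q ^ 2), if_pos (mem_univ _)]
          _ = q ^ 3 := by rw [Finset.sum_const, Finset.card_univ, smul_eq_mul, ← hqdef]; ring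
    · rw [if_neg h]
      have hΔ : x ^ u - y ^ u ≠ 0 := sub_ne_zero.mpr h
      have hxy : x ≠ y := fun hc => h (by rw [hc])
      have hne : ∀ u₂ v₂ : F, ((x, u₂) : F × F) ≠ (y, v₂) := by
        intro u₂ v₂ hc
        exact hxy (congrArg Prod.fst hc)
      calc (∑ u₂ : F, ∑ v₂ : F, if ((x, u₂) : F × F) ≠ (y, v₂) then
              ((univ.filter fun t : F => (x ^ u - y ^ u) * t ^ v = u₂ - v₂).card) ^ 2 else 0)
          = ∑ u₂ : F, ∑ v₂ : F,
              ((univ.filter fun t : F => t ^ v = (x ^ u - y ^ u)⁻¹ * (u₂ - v₂)).card) ^ 2 := by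
            refine Finset.sum_congr rfl (fun u₂ _ => Finset.sum_congr rfl (fun v₂ _ => ?_))
            rw [if_pos (hne u₂ v₂), filter_mul_ne hΔ]
        _ = ∑ u₂ : F, ∑ c : F, ((univ.filter fun t : F => t ^ v = c).card) ^ 2 := by
            refine Finset.sum_congr rfl (fun u₂ _ => ?_)
            exact Equiv.sum_comp ((Equiv.subLeft u₂).trans
              (Equiv.mulLeft₀ _ (inv_ne_zero hΔ)))
              (fun c => ((univ.filter fun t : F => t ^ v = c).card) ^ 2)
        _ = q * Spow F v := by
            rw [Finset.sum_congr rfl (fun u₂ _ => S_sq (F := F) (k := v)), Finset.sum_const,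
              Finset.card_univ, smul_eq_mul]
            rfl
  -- rewrite the double sum over pairs
  have main : (∑ p : F × F, ∑ p' : F × F, if p ≠ p' then
      ((univ.filter fun t : F => (p.1 ^ u - p'.1 ^ u) * t ^ v = p.2 - p'.2).card) ^ 2 else 0)
      = ∑ r : (F × F), if r.1 ^ u = r.2 ^ u then (if r.1 = r.2 then 0 else q ^ 3)
          else q * Spow F v := by
    rw [Fintype.sum_prod_type]
    calc (∑ x : F, ∑ u₂ : F, ∑ p' : F × F, if ((x, u₂) : F × F) ≠ p' then
            ((univ.filter fun t : F =>
              ((x, u₂).1 ^ u - p'.1 ^ u) * t ^ v = (x, u₂).2 - p'.2).card) ^ 2 else 0)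
        = ∑ x : F, ∑ u₂ : F, ∑ y : F, ∑ v₂ : F, if ((x, u₂) : F × F) ≠ (y, v₂) then
            ((univ.filter fun t : F => (x ^ u - y ^ u) * t ^ v = u₂ - v₂).card) ^ 2 else 0 := by
          exact Finset.sum_congr rfl fun x _ => Finset.sum_congr rfl fun u₂ _ =>
            Fintype.sum_prod_type _
      _ = ∑ x : F, ∑ y : F, ∑ u₂ : F, ∑ v₂ : F, if ((x, u₂) : F × F) ≠ (y, v₂) then
            ((univ.filter fun t : F => (x ^ u - y ^ u) * t ^ v = u₂ - v₂).card) ^ 2 else 0 := by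
          exact Finset.sum_congr rfl fun x _ => Finset.sum_comm
      _ = ∑ x : F, ∑ y : F, if x ^ u = y ^ u then (if x = y then 0 else q ^ 3)
            else q * Spow F v := by
          exact Finset.sum_congr rfl fun x _ => Finset.sum_congr rfl fun y _ => key x y
      _ = ∑ r : (F × F), if r.1 ^ u = r.2 ^ u then (if r.1 = r.2 then 0 else q ^ 3)
            else q * Spow F v :=
          (Fintype.sum_prod_type (f := fun r : F × F => if r.1 ^ u = r.2 ^ u then
            (if r.1 = r.2 then 0 else q ^ 3) else q * Spow F v)).symm
  have e1 : ((univ.filter fun r : F × F => r.1 ^ u = r.2 ^ u).filter fun r => r.1 = r.2)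
      = univ.filter fun r : F × F => r.1 = r.2 := by
    rw [Finset.filter_filter]
    apply Finset.filter_congr
    intro r _
    exact ⟨And.right, fun h => ⟨by rw [h], h⟩⟩
  rw [main, Finset.sum_ite, Finset.sum_ite, Finset.sum_const, Finset.sum_const,
    Finset.sum_const, e1, diag_card]
  simp only [smul_eq_mul, mul_zero, zero_add]
  set C := ((univ.filter fun r : F × F => r.1 ^ u = r.2 ^ u).filter
    fun r : F × F => ¬ r.1 = r.2).card with hCdef
  set D := (univ.filter fun r : F × F => ¬ r.1 ^ u = r.2 ^ u).card with hDdef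
  have hC : q + C = Spow F u := by
    rw [← Scard (F := F) u, hCdef,
      ← Finset.card_filter_add_card_filter_not (s := univ.filter
        fun r : F × F => r.1 ^ u = r.2 ^ u) (p := fun r => r.1 = r.2), e1, diag_card, hqdef]
  have hD : Spow F u + D = q ^ 2 := by
    rw [← Scard (F := F) u, hDdef,
      Finset.card_filter_add_card_filter_not (p := fun r : F × F => r.1 ^ u = r.2 ^ u),
      Finset.card_univ, Fintype.card_prod, sq, hqdef]
  clear_value C D q
  zify at hC hD ⊢
  linear_combination ((q : ℤ)^3) * hC + ((q : ℤ) * Spow F v) * hD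
lemma block_ncount {u v : ℕ} (hv : 0 < v) :
    (∑ p : F × F, ∑ p' : F × F, if (p ≠ p' ∧
        (univ.filter fun t : F =>
          (p.1 ^ u - p'.1 ^ u) * t ^ v = p.2 - p'.2).card = Fintype.card F) then 1 else 0)
      + Fintype.card F * Fintype.card F = Fintype.card F * Spow F u := by
  classical
  set q := Fintype.card F with hqdef
  have hq0 : 0 < q := Fintype.card_pos
  have key : ∀ x y : F, (∑ u₂ : F, ∑ v₂ : F, if (((x, u₂) : F × F) ≠ (y, v₂) ∧
      (univ.filter fun t : F => (x ^ u - y ^ u) * t ^ v = u₂ - v₂).card = q)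
      then 1 else 0)
      = if x ^ u = y ^ u then (if x = y then 0 else q) else 0 := by
    intro x y
    by_cases h : x ^ u = y ^ u
    · rw [if_pos h]
      by_cases hxy : x = y
      · subst hxy
        rw [if_pos rfl]
        apply Finset.sum_eq_zero; intro u₂ _
        apply Finset.sum_eq_zero; intro v₂ _
        rw [if_neg]
        rintro ⟨hne, hcard⟩
        rw [card_filter_eq_ite u rfl v] at hcard
        by_cases huv : u₂ = v₂
        · exact hne (by rw [huv])
        · rw [if_neg huv] at hcard; omega
      · rw [if_neg hxy]
        have hne : ∀ u₂ v₂ : F, ((x, u₂) : F × F) ≠ (y, v₂) := by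
          intro u₂ v₂ hc
          exact hxy (congrArg Prod.fst hc)
        calc (∑ u₂ : F, ∑ v₂ : F, if (((x, u₂) : F × F) ≠ (y, v₂) ∧
              (univ.filter fun t : F => (x ^ u - y ^ u) * t ^ v = u₂ - v₂).card = q)
              then 1 else 0)
            = ∑ u₂ : F, ∑ v₂ : F, if u₂ = v₂ then 1 else 0 := by
              refine Finset.sum_congr rfl (fun u₂ _ => Finset.sum_congr rfl (fun v₂ _ => ?_))
              rw [card_filter_eq_ite u h v]
              by_cases huv : u₂ = v₂
              · simp [huv, hne u₂ v₂, ← hqdef, hxy]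
              · simp [huv, hq0.ne]
          _ = ∑ u₂ : F, 1 := by
              refine Finset.sum_congr rfl (fun u₂ _ => ?_)
              rw [Finset.sum_ite_eq univ u₂ (fun _ => 1), if_pos (mem_univ _)]
          _ = q := by rw [Finset.sum_const, Finset.card_univ, smul_eq_mul, mul_one]
    · rw [if_neg h]
      apply Finset.sum_eq_zero; intro u₂ _
      apply Finset.sum_eq_zero; intro v₂ _
      rw [if_neg]
      rintro ⟨-, hcard⟩
      have := card_filter_lt (sub_ne_zero.mpr h) hv (u₂ - v₂)
      omega
  have main : (∑ p : F × F, ∑ p' : F × F, if (p ≠ p' ∧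
      (univ.filter fun t : F =>
        (p.1 ^ u - p'.1 ^ u) * t ^ v = p.2 - p'.2).card = q) then 1 else 0)
      = ∑ r : (F × F), if r.1 ^ u = r.2 ^ u then (if r.1 = r.2 then 0 else q) else 0 := by
    rw [Fintype.sum_prod_type]
    calc (∑ x : F, ∑ u₂ : F, ∑ p' : F × F, if (((x, u₂) : F × F) ≠ p' ∧
            (univ.filter fun t : F =>
              ((x, u₂).1 ^ u - p'.1 ^ u) * t ^ v = (x, u₂).2 - p'.2).card = q) then 1 else 0)
        = ∑ x : F, ∑ u₂ : F, ∑ y : F, ∑ v₂ : F, if (((x, u₂) : F × F) ≠ (y, v₂) ∧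
            (univ.filter fun t : F => (x ^ u - y ^ u) * t ^ v = u₂ - v₂).card = q)
            then 1 else 0 := by
          exact Finset.sum_congr rfl fun x _ => Finset.sum_congr rfl fun u₂ _ =>
            Fintype.sum_prod_type _
      _ = ∑ x : F, ∑ y : F, ∑ u₂ : F, ∑ v₂ : F, if (((x, u₂) : F × F) ≠ (y, v₂) ∧
            (univ.filter fun t : F => (x ^ u - y ^ u) * t ^ v = u₂ - v₂).card = q)
            then 1 else 0 := by
          exact Finset.sum_congr rfl fun x _ => Finset.sum_comm
      _ = ∑ x : F, ∑ y : F, if x ^ u = y ^ u then (if x = y then 0 else q) else 0 := by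
          exact Finset.sum_congr rfl fun x _ => Finset.sum_congr rfl fun y _ => key x y
      _ = ∑ r : (F × F), if r.1 ^ u = r.2 ^ u then (if r.1 = r.2 then 0 else q) else 0 :=
          (Fintype.sum_prod_type (f := fun r : F × F => if r.1 ^ u = r.2 ^ u then
            (if r.1 = r.2 then 0 else q) else 0)).symm
  have e1 : ((univ.filter fun r : F × F => r.1 ^ u = r.2 ^ u).filter fun r => r.1 = r.2)
      = univ.filter fun r : F × F => r.1 = r.2 := by
    rw [Finset.filter_filter]
    apply Finset.filter_congr
    intro r _
    exact ⟨And.right, fun h => ⟨by rw [h], h⟩⟩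
  rw [main, Finset.sum_ite, Finset.sum_ite, Finset.sum_const, Finset.sum_const,
    Finset.sum_const_zero, e1, diag_card]
  simp only [smul_eq_mul, mul_zero, zero_add, add_zero]
  set C := ((univ.filter fun r : F × F => r.1 ^ u = r.2 ^ u).filter
    fun r : F × F => ¬ r.1 = r.2).card with hCdef
  have hC : q + C = Spow F u := by
    rw [← Scard (F := F) u, hCdef,
      ← Finset.card_filter_add_card_filter_not (s := univ.filter
        fun r : F × F => r.1 ^ u = r.2 ^ u) (p := fun r => r.1 = r.2), e1, diag_card, hqdef]
  rw [← hC]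
  ring
noncomputable def tsum {V : Type} [Fintype V] [DecidableEq V] (G : SimpleGraph V) : ℕ :=
  ∑ x : V, ∑ y : V, if x ≠ y then codeg G x y ^ 2 else 0

noncomputable def ncount {V : Type} [Fintype V] [DecidableEq V] (G : SimpleGraph V) (k : ℕ) : ℕ :=
  ∑ x : V, ∑ y : V, if x ≠ y ∧ codeg G x y = k then 1 else 0

lemma tsum_eq_of_iso {V V' : Type} [Fintype V] [DecidableEq V] [Fintype V'] [DecidableEq V']
    {G : SimpleGraph V} {G' : SimpleGraph V'} (e : G ≃g G') : tsum G = tsum G' := by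
  rw [tsum, tsum]
  refine Fintype.sum_equiv e.toEquiv _ _ (fun x => ?_)
  refine Fintype.sum_equiv e.toEquiv _ _ (fun y => ?_)
  rw [codeg_map e]
  by_cases h : x = y
  · subst h; simp
  · rw [if_pos h, if_pos (fun hc => h (e.toEquiv.injective hc))]

lemma ncount_eq_of_iso {V V' : Type} [Fintype V] [DecidableEq V] [Fintype V'] [DecidableEq V']
    {G : SimpleGraph V} {G' : SimpleGraph V'} (e : G ≃g G') (k : ℕ) : ncount G k = ncount G' k := by
  rw [ncount, ncount]
  refine Fintype.sum_equiv e.toEquiv _ _ (fun x => ?_)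
  refine Fintype.sum_equiv e.toEquiv _ _ (fun y => ?_)
  rw [codeg_map e]
  by_cases h : x = y
  · subst h; simp
  · by_cases h2 : codeg G x y = k
    · rw [if_pos ⟨h, h2⟩, if_pos ⟨fun hc => h (e.toEquiv.injective hc), h2⟩]
    · rw [if_neg (fun hc => h2 hc.2), if_neg (fun hc => h2 hc.2)]

lemma tsum_monomial {m n : ℕ} (hm : 0 < m) (hn : 0 < n) :
    tsum (monomialGraph F m n) + 2 * (Fintype.card F) ^ 4
        + 2 * (Fintype.card F * Spow F m * Spow F n)
      = 2 * ((Fintype.card F) ^ 3 * Spow F m) + 2 * ((Fintype.card F) ^ 3 * Spow F n) := by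
  classical
  rw [tsum, Fintype.sum_sum_type]
  have h1 : ∀ p : F × F, (∑ y : (F × F) ⊕ (F × F), if Sum.inl p ≠ y
      then codeg (monomialGraph F m n) (Sum.inl p) y ^ 2 else 0)
      = ∑ p' : F × F, if p ≠ p' then
        ((univ.filter fun t : F => (p.1 ^ m - p'.1 ^ m) * t ^ n = p.2 - p'.2).card) ^ 2
        else 0 := by
    intro p
    rw [Fintype.sum_sum_type]
    have hz : (∑ l : F × F, if Sum.inl p ≠ Sum.inr l
        then codeg (monomialGraph F m n) (Sum.inl p) (Sum.inr l) ^ 2 else 0) = 0 := by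
      apply Finset.sum_eq_zero; intro l _
      rw [codeg_inl_inr]
      simp
    rw [hz, add_zero]
    refine Finset.sum_congr rfl (fun p' _ => ?_)
    rw [codeg_inl_inl]
    by_cases h : p = p'
    · subst h; simp
    · rw [if_pos (show Sum.inl p ≠ Sum.inl p' by simp [h]), if_pos h]
  have h2 : ∀ l : F × F, (∑ y : (F × F) ⊕ (F × F), if Sum.inr l ≠ y
      then codeg (monomialGraph F m n) (Sum.inr l) y ^ 2 else 0)
      = ∑ l' : F × F, if l ≠ l' then
        ((univ.filter fun t : F => (l.1 ^ n - l'.1 ^ n) * t ^ m = l.2 - l'.2).card) ^ 2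
        else 0 := by
    intro l
    rw [Fintype.sum_sum_type]
    have hz : (∑ p : F × F, if Sum.inr l ≠ Sum.inl p
        then codeg (monomialGraph F m n) (Sum.inr l) (Sum.inl p) ^ 2 else 0) = 0 := by
      apply Finset.sum_eq_zero; intro p _
      rw [codeg_inr_inl]
      simp
    rw [hz, zero_add]
    refine Finset.sum_congr rfl (fun l' _ => ?_)
    rw [codeg_inr_inr]
    by_cases h : l = l'
    · subst h; simp
    · rw [if_pos (show Sum.inr l ≠ Sum.inr l' by simp [h]), if_pos h]
  rw [Finset.sum_congr rfl (fun p _ => h1 p), Finset.sum_congr rfl (fun l _ => h2 l)]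
  have B1 := block_tsum (F := F) (u := m) (v := n) hm hn
  have B2 := block_tsum (F := F) (u := n) (v := m) hn hm
  zify at B1 B2 ⊢
  linear_combination B1 + B2

lemma ncount_monomial {m n : ℕ} (hm : 0 < m) (hn : 0 < n) :
    ncount (monomialGraph F m n) (Fintype.card F) + 2 * (Fintype.card F * Fintype.card F)
      = Fintype.card F * Spow F m + Fintype.card F * Spow F n := by
  classical
  have hq0 : 0 < Fintype.card F := Fintype.card_pos (α := F)
  rw [ncount, Fintype.sum_sum_type]
  have h1 : ∀ p : F × F, (∑ y : (F × F) ⊕ (F × F), if (Sum.inl p ≠ y ∧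
      codeg (monomialGraph F m n) (Sum.inl p) y = Fintype.card F) then 1 else 0)
      = ∑ p' : F × F, if (p ≠ p' ∧
        (univ.filter fun t : F =>
          (p.1 ^ m - p'.1 ^ m) * t ^ n = p.2 - p'.2).card = Fintype.card F) then 1 else 0 := by
    intro p
    rw [Fintype.sum_sum_type]
    have hz : (∑ l : F × F, if (Sum.inl p ≠ Sum.inr l ∧
        codeg (monomialGraph F m n) (Sum.inl p) (Sum.inr l) = Fintype.card F)
        then 1 else 0) = 0 := by
      apply Finset.sum_eq_zero; intro l _
      rw [codeg_inl_inr, if_neg]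
      rintro ⟨-, hc⟩
      omega
    rw [hz, add_zero]
    refine Finset.sum_congr rfl (fun p' _ => ?_)
    rw [codeg_inl_inl]
    by_cases h : p = p'
    · subst h; simp
    · by_cases h2 : (univ.filter fun t : F =>
          (p.1 ^ m - p'.1 ^ m) * t ^ n = p.2 - p'.2).card = Fintype.card F
      · rw [if_pos ⟨show Sum.inl p ≠ Sum.inl p' by simp [h], h2⟩, if_pos ⟨h, h2⟩]
      · rw [if_neg (fun hc => h2 hc.2), if_neg (fun hc => h2 hc.2)]
  have h2 : ∀ l : F × F, (∑ y : (F × F) ⊕ (F × F), if (Sum.inr l ≠ y ∧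
      codeg (monomialGraph F m n) (Sum.inr l) y = Fintype.card F) then 1 else 0)
      = ∑ l' : F × F, if (l ≠ l' ∧
        (univ.filter fun t : F =>
          (l.1 ^ n - l'.1 ^ n) * t ^ m = l.2 - l'.2).card = Fintype.card F) then 1 else 0 := by
    intro l
    rw [Fintype.sum_sum_type]
    have hz : (∑ p : F × F, if (Sum.inr l ≠ Sum.inl p ∧
        codeg (monomialGraph F m n) (Sum.inr l) (Sum.inl p) = Fintype.card F)
        then 1 else 0) = 0 := by
      apply Finset.sum_eq_zero; intro p _
      rw [codeg_inr_inl, if_neg]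
      rintro ⟨-, hc⟩
      omega
    rw [hz, zero_add]
    refine Finset.sum_congr rfl (fun l' _ => ?_)
    rw [codeg_inr_inr]
    by_cases h : l = l'
    · subst h; simp
    · by_cases h2 : (univ.filter fun t : F =>
          (l.1 ^ n - l'.1 ^ n) * t ^ m = l.2 - l'.2).card = Fintype.card F
      · rw [if_pos ⟨show Sum.inr l ≠ Sum.inr l' by simp [h], h2⟩, if_pos ⟨h, h2⟩]
      · rw [if_neg (fun hc => h2 hc.2), if_neg (fun hc => h2 hc.2)]
  rw [Finset.sum_congr rfl (fun p _ => h1 p), Finset.sum_congr rfl (fun l _ => h2 l)]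
  have B1 := block_ncount (F := F) (u := m) (v := n) hn
  have B2 := block_ncount (F := F) (u := n) (v := m) hm
  zify at B1 B2 ⊢
  linear_combination B1 + B2
lemma exists_pow_eq_iff {j : ℕ} (hj : 0 < j) {c : F} (hc : c ≠ 0) :
    (∃ x : F, x ^ j = c) ↔
      (∃ x : F, x ^ (Nat.gcd j (Fintype.card F - 1)) = c) := by
  obtain ⟨g, hg⟩ := IsCyclic.exists_generator (α := Fˣ)
  have hog : orderOf g = Fintype.card F - 1 := by
    rw [orderOf_eq_card_of_forall_mem_zpowers hg, Nat.card_eq_fintype_card, Fintype.card_units]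
  set N : ℕ := Fintype.card F - 1 with hN
  set u : Fˣ := Units.mk0 c hc with hu
  obtain ⟨k, hk⟩ := hg u
  simp only at hk
  -- key : for any exponent i, solvability iff gcd i N ∣ k
  have key : ∀ i : ℕ, 0 < i → ((∃ x : F, x ^ i = c) ↔ ((Nat.gcd i N : ℤ) ∣ k)) := by
    intro i hi
    constructor
    · rintro ⟨x, hx⟩
      have hx0 : x ≠ 0 := by
        rintro rfl
        rw [zero_pow hi.ne'] at hx
        exact hc hx.symm
      obtain ⟨w, hw⟩ := hg (Units.mk0 x hx0)
      simp only at hw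
      have hwi : (g ^ (w * i) : Fˣ) = u := by
        rw [zpow_mul, hw]
        ext
        push_cast
        rw [Units.val_mk0, zpow_natCast, hu, Units.val_mk0]
        exact hx
      have hdvd : (orderOf g : ℤ) ∣ w * i - k := by
        exact dvd_sub_comm.mp (Int.ModEq.dvd (zpow_eq_zpow_iff_modEq.mp (hwi.trans hk.symm)))
      have h1 : (Nat.gcd i N : ℤ) ∣ w * i - k := by
        refine dvd_trans ?_ hdvd
        rw [hog]
        exact Int.natCast_dvd_natCast.mpr (Nat.gcd_dvd_right i N)
      have h2 : (Nat.gcd i N : ℤ) ∣ w * i :=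
        Dvd.dvd.mul_left (Int.natCast_dvd_natCast.mpr (Nat.gcd_dvd_left i N)) w
      simpa using dvd_sub h2 h1
    · rintro ⟨k', rfl⟩
      set A := Nat.gcdA i N with hA
      set B := Nat.gcdB i N with hB
      have hbez : (Nat.gcd i N : ℤ) = i * A + N * B := Nat.gcd_eq_gcd_ab i N
      refine ⟨((g ^ (A * k') : Fˣ) : F), ?_⟩
      have this1 : (g ^ (A * k') : Fˣ) ^ (i : ℤ) = g ^ (A * k' * i) := by
        rw [← zpow_mul]
      have this2 : ((g ^ (A * k') : Fˣ) : F) ^ i = ((g ^ (A * k' * i) : Fˣ) : F) := by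
        rw [← this1]
        norm_cast
      rw [this2]
      have hexp : (g : Fˣ) ^ (A * k' * i) = g ^ ((Nat.gcd i N : ℤ) * k') := by
        refine zpow_eq_zpow_iff_modEq.mpr (Int.ModEq.symm (Int.modEq_iff_dvd.mpr ?_))
        rw [hog]
        refine ⟨-(B * k'), by linear_combination (-k') * hbez⟩
      rw [hexp, hk]
      rfl
  rw [key j hj, key (Nat.gcd j N) (Nat.gcd_pos_of_pos_left _ hj), Nat.gcd_eq_left
    (Nat.gcd_dvd_right j N)]
lemma card_fiber_eq {m : ℕ} (hm : 0 < m) (c : F) :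
    (univ.filter fun x : F => x ^ m = c).card
      = (univ.filter fun x : F => x ^ (Nat.gcd m (Fintype.card F - 1)) = c).card := by
  set a := Nat.gcd m (Fintype.card F - 1) with ha
  have hapos : 0 < a := Nat.gcd_pos_of_pos_left _ hm
  by_cases hc : c = 0
  · subst hc
    rw [card_pow_eq_zero hm, card_pow_eq_zero hapos]
  · by_cases hex : ∃ x : F, x ^ m = c
    · obtain ⟨x₀, hx₀⟩ := hex
      obtain ⟨y₀, hy₀⟩ := (exists_pow_eq_iff hm hc).mp ⟨x₀, hx₀⟩
      rw [card_pow_eq_c hm x₀ hx₀ hc, card_pow_eq_c hapos y₀ hy₀ hc, ← ha,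
        Nat.gcd_eq_left (Nat.gcd_dvd_right m (Fintype.card F - 1))]
    · have hex2 : ¬ ∃ x : F, x ^ a = c := fun h => hex ((exists_pow_eq_iff hm hc).mpr h)
      rw [Finset.filter_false_of_mem (fun x _ hx => hex ⟨x, hx⟩),
        Finset.filter_false_of_mem (fun x _ hx => hex2 ⟨x, hx⟩)]

lemma exists_equiv_pow {m : ℕ} (hm : 0 < m) :
    ∃ σ : F ≃ F, ∀ x : F, σ x ^ (Nat.gcd m (Fintype.card F - 1)) = x ^ m := by
  have key : ∀ c : F, Fintype.card {x : F // x ^ m = c}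
      = Fintype.card {x : F // x ^ (Nat.gcd m (Fintype.card F - 1)) = c} := by
    intro c
    rw [Fintype.card_subtype, Fintype.card_subtype, card_fiber_eq hm]
  exact ⟨Equiv.ofFiberEquiv (fun c => Fintype.equivOfCardEq (key c)),
    fun x => Equiv.ofFiberEquiv_map _ x⟩
omit [Fintype F] [DecidableEq F] in
lemma iso_coords {m n m' n' : ℕ} (σ τ : F ≃ F) (hσ : ∀ x : F, σ x ^ m' = x ^ m)
    (hτ : ∀ x : F, τ x ^ n' = x ^ n) :
    Nonempty (monomialGraph F m n ≃g monomialGraph F m' n') := by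
  refine ⟨⟨Equiv.sumCongr (Equiv.prodCongr σ (Equiv.refl F)) (Equiv.prodCongr τ (Equiv.refl F)),
    ?_⟩⟩
  rintro (p | l) (p' | l')
  · exact iff_of_false (not_adj_inl_inl _ _ _ _) (not_adj_inl_inl _ _ _ _)
  · show (monomialGraph F m' n').Adj (Sum.inl (σ p.1, p.2)) (Sum.inr (τ l'.1, l'.2))
      ↔ (monomialGraph F m n).Adj (Sum.inl p) (Sum.inr l')
    rw [adj_inl_inr, adj_inl_inr]
    show p.2 + l'.2 = σ p.1 ^ m' * τ l'.1 ^ n' ↔ _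
    rw [hσ, hτ]
  · show (monomialGraph F m' n').Adj (Sum.inr (τ l.1, l.2)) (Sum.inl (σ p'.1, p'.2))
      ↔ (monomialGraph F m n).Adj (Sum.inr l) (Sum.inl p')
    rw [adj_inr_inl, adj_inr_inl]
    show p'.2 + l.2 = σ p'.1 ^ m' * τ l.1 ^ n' ↔ _
    rw [hσ, hτ]
  · exact iff_of_false (not_adj_inr_inr _ _ _ _) (not_adj_inr_inr _ _ _ _)

omit [Fintype F] [DecidableEq F] in
lemma iso_swap (m n : ℕ) :
    Nonempty (monomialGraph F m n ≃g monomialGraph F n m) := by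
  refine ⟨⟨Equiv.sumComm (F × F) (F × F), ?_⟩⟩
  rintro (p | l) (p' | l')
  · exact iff_of_false (not_adj_inr_inr _ _ _ _) (not_adj_inl_inl _ _ _ _)
  · show (monomialGraph F n m).Adj (Sum.inr p) (Sum.inl l')
      ↔ (monomialGraph F m n).Adj (Sum.inl p) (Sum.inr l')
    rw [adj_inr_inl, adj_inl_inr]
    constructor <;> intro h <;> linear_combination h
  · show (monomialGraph F n m).Adj (Sum.inl l) (Sum.inr p')
      ↔ (monomialGraph F m n).Adj (Sum.inr l) (Sum.inl p')
    rw [adj_inl_inr, adj_inr_inl]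
    constructor <;> intro h <;> linear_combination h
  · exact iff_of_false (not_adj_inl_inl _ _ _ _) (not_adj_inr_inr _ _ _ _)

omit [Fintype F] [DecidableEq F] in
lemma iso_field {F' : Type} [Field F'] (e : F ≃+* F') (m n : ℕ) :
    Nonempty (monomialGraph F m n ≃g monomialGraph F' m n) := by
  refine ⟨⟨Equiv.sumCongr (Equiv.prodCongr e.toEquiv e.toEquiv)
    (Equiv.prodCongr e.toEquiv e.toEquiv), ?_⟩⟩
  rintro (p | l) (p' | l')
  · exact iff_of_false (not_adj_inl_inl _ _ _ _) (not_adj_inl_inl _ _ _ _)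
  · show (monomialGraph F' m n).Adj (Sum.inl (e p.1, e p.2)) (Sum.inr (e l'.1, e l'.2))
      ↔ (monomialGraph F m n).Adj (Sum.inl p) (Sum.inr l')
    rw [adj_inl_inr, adj_inl_inr]
    show e p.2 + e l'.2 = e p.1 ^ m * e l'.1 ^ n ↔ _
    rw [← map_pow, ← map_pow, ← map_mul, ← map_add]
    exact ⟨fun h => e.injective h, fun h => congrArg e h⟩
  · show (monomialGraph F' m n).Adj (Sum.inr (e l.1, e l.2)) (Sum.inl (e p'.1, e p'.2))
      ↔ (monomialGraph F m n).Adj (Sum.inr l) (Sum.inl p')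
    rw [adj_inr_inl, adj_inr_inl]
    show e p'.2 + e l.2 = e p'.1 ^ m * e l.1 ^ n ↔ _
    rw [← map_pow, ← map_pow, ← map_mul, ← map_add]
    exact ⟨fun h => e.injective h, fun h => congrArg e h⟩
  · exact iff_of_false (not_adj_inr_inr _ _ _ _) (not_adj_inr_inr _ _ _ _)

lemma nat_pair {a b c d : ℕ} (hs : a + b = c + d) (hp : a * b = c * d) :
    a = c ∧ b = d ∨ a = d ∧ b = c := by
  have hs' : (a : ℤ) + b = c + d := by exact_mod_cast hs
  have hp' : (a : ℤ) * b = c * d := by exact_mod_cast hp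
  have hz : ((a : ℤ) - c) * ((a : ℤ) - d) = 0 := by linear_combination (a : ℤ) * hs' - hp'
  rcases mul_eq_zero.mp hz with h | h
  · have : (a : ℤ) = c := by linarith [sub_eq_zero.mp h]
    have hac : a = c := by exact_mod_cast this
    left
    omega
  · have : (a : ℤ) = d := by linarith [sub_eq_zero.mp h]
    have had : a = d := by exact_mod_cast this
    right
    omega

lemma multiset_pair_iff {a b c d : ℕ} :
    ({a, b} : Multiset ℕ) = {c, d} ↔ (a = c ∧ b = d) ∨ (a = d ∧ b = c) := by
  constructor
  · intro h
    rcases Multiset.cons_eq_cons.mp h with ⟨h1, h2⟩ | ⟨-, cs, h1, h2⟩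
    · left
      exact ⟨h1, Multiset.singleton_inj.mp h2⟩
    · have hcs : cs = 0 := by
        have hcard := congrArg Multiset.card h1
        simp only [Multiset.card_singleton, Multiset.card_cons] at hcard
        exact Multiset.card_eq_zero.mp (by omega)
      subst hcs
      right
      simp only [Multiset.cons_zero] at h1 h2
      exact ⟨(Multiset.singleton_inj.mp h2).symm, Multiset.singleton_inj.mp h1⟩
  · rintro (⟨rfl, rfl⟩ | ⟨rfl, rfl⟩)
    · rfl
    · exact Multiset.pair_comm a b
end MGAux

open MGAux

/-- `B(q; m, n) ≅ B(q'; m', n')` iff `q = q'` and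
`{gcd(m, q-1), gcd(n, q-1)} = {gcd(m', q-1), gcd(n', q-1)}` as multisets. -/
theorem statement_10 (F F' : Type) [Field F] [Fintype F] [Field F'] [Fintype F']
    (m n m' n' : ℕ) (hm : 0 < m) (hn : 0 < n) (hm' : 0 < m') (hn' : 0 < n') :
    Nonempty (monomialGraph F m n ≃g monomialGraph F' m' n') ↔
      (Fintype.card F = Fintype.card F' ∧
        ({Nat.gcd m (Fintype.card F - 1), Nat.gcd n (Fintype.card F - 1)} : Multiset ℕ)
          = {Nat.gcd m' (Fintype.card F - 1), Nat.gcd n' (Fintype.card F - 1)}) := by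
  classical
  constructor
  · rintro ⟨e⟩
    have hcard : Fintype.card F = Fintype.card F' := by
      have h2 := Fintype.card_congr e.toEquiv
      simp only [Fintype.card_sum, Fintype.card_prod] at h2
      have h3 : Fintype.card F * Fintype.card F = Fintype.card F' * Fintype.card F' := by
        linarith
      exact Nat.mul_self_inj.mp h3
    refine ⟨hcard, ?_⟩
    have hq1 : 1 < Fintype.card F := Fintype.one_lt_card
    have e1 := tsum_monomial (F := F) hm hn
    have e2 := tsum_monomial (F := F') hm' hn'
    have e3 := ncount_monomial (F := F) hm hn
    have e4 := ncount_monomial (F := F') hm' hn'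
    rw [← hcard] at e2 e4
    have hT : tsum (monomialGraph F m n) = tsum (monomialGraph F' m' n') := tsum_eq_of_iso e
    have hN := ncount_eq_of_iso e (Fintype.card F)
    have hsum : Spow F m + Spow F n = Spow F' m' + Spow F' n' := by
      have h5 : Fintype.card F * (Spow F m + Spow F n)
          = Fintype.card F * (Spow F' m' + Spow F' n') := by
        rw [Nat.mul_add, Nat.mul_add]
        linarith [e3, e4, hN]
      exact Nat.eq_of_mul_eq_mul_left (by omega) h5
    have hprod : Spow F m * Spow F n = Spow F' m' * Spow F' n' := by
      have h6 : (Fintype.card F : ℤ) ^ 3 * Spow F m + (Fintype.card F : ℤ) ^ 3 * Spow F n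
          = (Fintype.card F : ℤ) ^ 3 * Spow F' m' + (Fintype.card F : ℤ) ^ 3 * Spow F' n' := by
        have h := hsum
        zify at h
        linear_combination ((Fintype.card F : ℤ) ^ 3) * h
      have h7 : (2 * (Fintype.card F : ℤ)) * ((Spow F m : ℤ) * Spow F n)
          = (2 * (Fintype.card F : ℤ)) * ((Spow F' m' : ℤ) * Spow F' n') := by
        zify at e1 e2 hT
        linear_combination e1 - e2 - hT + 2 * h6
      have h8 : (Spow F m : ℤ) * Spow F n = (Spow F' m' : ℤ) * Spow F' n' :=
        mul_left_cancel₀ (by positivity) h7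
      exact_mod_cast h8
    have key := nat_pair hsum hprod
    rw [Spow_val (F := F) hm, Spow_val (F := F) hn, Spow_val (F := F') hm',
      Spow_val (F := F') hn', ← hcard] at key
    have hq0 : 0 < Fintype.card F - 1 := by omega
    rcases key with ⟨h1, h2⟩ | ⟨h1, h2⟩
    · have g1 : Nat.gcd m (Fintype.card F - 1) = Nat.gcd m' (Fintype.card F - 1) :=
        Nat.eq_of_mul_eq_mul_left hq0 (Nat.add_right_cancel h1)
      have g2 : Nat.gcd n (Fintype.card F - 1) = Nat.gcd n' (Fintype.card F - 1) :=
        Nat.eq_of_mul_eq_mul_left hq0 (Nat.add_right_cancel h2)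
      rw [g1, g2]
    · have g1 : Nat.gcd m (Fintype.card F - 1) = Nat.gcd n' (Fintype.card F - 1) :=
        Nat.eq_of_mul_eq_mul_left hq0 (Nat.add_right_cancel h1)
      have g2 : Nat.gcd n (Fintype.card F - 1) = Nat.gcd m' (Fintype.card F - 1) :=
        Nat.eq_of_mul_eq_mul_left hq0 (Nat.add_right_cancel h2)
      rw [g1, g2]
      exact Multiset.pair_comm _ _
  · rintro ⟨hcard, hpair⟩
    obtain ⟨σ, hσ⟩ := exists_equiv_pow (F := F) hm
    obtain ⟨τ, hτ⟩ := exists_equiv_pow (F := F) hn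
    obtain ⟨σ', hσ'⟩ := exists_equiv_pow (F := F') hm'
    obtain ⟨τ', hτ'⟩ := exists_equiv_pow (F := F') hn'
    obtain ⟨i1⟩ := iso_coords σ τ hσ hτ
    have eF := FiniteField.ringEquivOfCardEq hcard
    rcases multiset_pair_iff.mp hpair with ⟨h1, h2⟩ | ⟨h1, h2⟩
    · have ha : Nat.gcd m' (Fintype.card F' - 1) = Nat.gcd m (Fintype.card F - 1) := by
        rw [← hcard, ← h1]
      have hb : Nat.gcd n' (Fintype.card F' - 1) = Nat.gcd n (Fintype.card F - 1) := by
        rw [← hcard, ← h2]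
      rw [ha] at hσ'
      rw [hb] at hτ'
      obtain ⟨i2⟩ := iso_coords σ' τ' hσ' hτ'
      obtain ⟨i3⟩ := iso_field eF (Nat.gcd m (Fintype.card F - 1))
        (Nat.gcd n (Fintype.card F - 1))
      exact ⟨i1.trans (i3.trans i2.symm)⟩
    · have ha : Nat.gcd m' (Fintype.card F' - 1) = Nat.gcd n (Fintype.card F - 1) := by
        rw [← hcard, ← h2]
      have hb : Nat.gcd n' (Fintype.card F' - 1) = Nat.gcd m (Fintype.card F - 1) := by
        rw [← hcard, ← h1]
      rw [ha] at hσ'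
      rw [hb] at hτ'
      obtain ⟨i2⟩ := iso_coords σ' τ' hσ' hτ'
      obtain ⟨i3⟩ := iso_field eF (Nat.gcd m (Fintype.card F - 1))
        (Nat.gcd n (Fintype.card F - 1))
      obtain ⟨i4⟩ := iso_swap (F := F') (Nat.gcd m (Fintype.card F - 1))
        (Nat.gcd n (Fintype.card F - 1))
      exact ⟨i1.trans (i3.trans (i4.trans i2.symm))⟩
end
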